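/- arXiv:1301.6531 — 2 statements merged into one kernel-verified Lean document; each statement's English description precedes it below -/
import Mathlib

section
/- Let M be a map and let E0 be a bridge of M. Then E0 is a straight edge. -/
open Equiv Polynomial

open scoped Classical

noncomputable section

variable {α : Type*}

/-- `f` is a *pairing* of the finite set `S`: an involution of the ambient type which
moves exactly the elements of `S` (i.e., a fixpoint-free involution of `S`, extended by
the identity outside of `S`); the pairs of the pairing are the orbits `{a, f a}`. -/
def IsPairing (S : Finset α) (f : Equiv.Perm α) : Prop :=
  (∀ a, f (f a) = a) ∧ ∀ a, f a ≠ a ↔ a ∈ S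

/-- The pairing `P_{{s₁,s₂}}` obtained from the pairing `f` by removing the elements
`s₁, s₂` : if `{s₁,s₂}` is a pair of `f` it is simply deleted; otherwise the pairs
containing `s₁` and `s₂` are deleted and the partners `f s₁`, `f s₂` are matched
together. -/
def removeP (f : Equiv.Perm α) (s₁ s₂ : α) : Equiv.Perm α :=
  Equiv.swap s₁ s₂ * Equiv.swap s₁ (f s₂) * Equiv.swap s₂ (f s₁) * f

/-- `t` lies in the polygon of `L(b,w)` containing `s`, in *even position* with
respect to `s`: `t` is obtained from `s` by an odd alternating word in the
involutions `b` and `w`. -/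
def EvenPos (b w : Equiv.Perm α) (s t : α) : Prop :=
  ∃ j : ℤ, t = ((w * b) ^ j * b) s

/-- `t` lies in the polygon of `L(b,w)` containing `s`, in *odd position* with respect
to `s`: `t` is obtained from `s` by an even alternating word in the involutions
`b` and `w`. -/
def OddPos (b w : Equiv.Perm α) (s t : α) : Prop :=
  ∃ j : ℤ, t = ((w * b) ^ j) s

/-- `s` and `t` lie in the same polygon of `L(b,w)`. -/
def SameFace (b w : Equiv.Perm α) (s t : α) : Prop :=
  EvenPos b w s t ∨ OddPos b w s t

/-- The edge `{s,t}` is *straight*: both edge-sides lie in the same face,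
in even position. -/
def IsStraight (b w : Equiv.Perm α) (s t : α) : Prop :=
  SameFace b w s t ∧ EvenPos b w s t

/-- The edge `{s,t}` is *twisted*: both edge-sides lie in the same face,
in odd position. -/
def IsTwisted (b w : Equiv.Perm α) (s t : α) : Prop :=
  SameFace b w s t ∧ OddPos b w s t

/-- The edge `{s,t}` is an *interface* edge: its edge-sides lie in two
different faces. -/
def IsInterface (b w : Equiv.Perm α) (s t : α) : Prop :=
  ¬ SameFace b w s t

/-- The polygon (face) of `L(b,w)` containing `s`, as the set of its edge-sides. -/
def faceOf (S : Finset α) (b w : Equiv.Perm α) (s : α) : Finset α :=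
  S.filter (SameFace b w s)

/-- The collection of polygons (faces) of `L(b,w)`. -/
def faces (S : Finset α) (b w : Equiv.Perm α) : Finset (Finset α) :=
  S.image (faceOf S b w)

/-- The number of polygons (faces) of `L(b,w)`. -/
def numFaces (S : Finset α) (b w : Equiv.Perm α) : ℕ :=
  (faces S b w).card

/-- The *type* of the couple of pairings `(b,w)`: the multiset of half-lengths of the
polygons of `L(b,w)`. -/
def faceType (S : Finset α) (b w : Equiv.Perm α) : Multiset ℕ :=
  (faces S b w).val.map fun F => F.card / 2

/-- `s` and `t` lie in the same connected component of the map `(b,w,e)`: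
`t` is obtained from `s` by applying partner maps in `b`, `w`, `e` repeatedly. -/
def SameComponent (b w e : Equiv.Perm α) (s t : α) : Prop :=
  ∃ g ∈ Subgroup.closure ({b, w, e} : Set (Equiv.Perm α)), g s = t

/-- The number of connected components of the map `(S, b, w, e)`. -/
def numComponents (S : Finset α) (b w e : Equiv.Perm α) : ℕ :=
  (S.image fun s => S.filter (SameComponent b w e s)).card

/-- The number of vertices of the map `(S, b, w, e)`: black vertices are the polygons
of `L(b,e)`, white vertices are the polygons of `L(w,e)`. -/
def numVertices (S : Finset α) (b w e : Equiv.Perm α) : ℕ :=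
  numFaces S b e + numFaces S w e

/-- The number of edges of a map with edge-side set `S`. -/
def numEdges (S : Finset α) : ℕ := S.card / 2

/-- The Euler characteristic `χ(M) = |V(M)| - |E(M)| + |F(M)|` of the map
`M = (S, b, w, e)`. -/
def eulerChar (S : Finset α) (b w e : Equiv.Perm α) : ℤ :=
  (numVertices S b w e : ℤ) - (numEdges S : ℤ) + (numFaces S b w : ℤ)

/-- The quantity `d(M) = 2·(number of connected components of M) - χ(M)`. -/
def dInv (S : Finset α) (b w e : Equiv.Perm α) : ℤ :=
  2 * (numComponents S b w e : ℤ) - eulerChar S b w e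

/-- The edge `{s, e s}` of the map `(b, w, e)` is a *bridge*: either one of its
extremities is a leaf (the pair belongs to `b` or to `w` as well), or its two
extremities lie in different connected components of the map with this edge removed. -/
def IsBridge (b w e : Equiv.Perm α) (s : α) : Prop :=
  (b s = e s ∨ w s = e s) ∨
    ¬ SameComponent (removeP b s (e s)) (removeP w s (e s)) (removeP e s (e s))
        (b s) (w s)

/-- The weight of the edge `{s,t}` in the map with face structure given by `(b,w)`,
as a polynomial in the variable `γ` (over `ℚ`): `1` for a straight edge, `γ` for a
twisted edge, `1/2` for an interface edge. -/
def edgeWeight (b w : Equiv.Perm α) (s t : α) : Polynomial ℚ :=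
  if IsStraight b w s t then 1
  else if IsTwisted b w s t then Polynomial.X
  else Polynomial.C (1 / 2)

/-- The weight `w_{M,≺}` of a map `(b,w,e)` equipped with a history, the latter
encoded as the list of the edges in increasing order (each edge represented by one
of its edge-sides): the product of the weights of the edges, each weight being
computed in the map in which all previous edges have already been removed. -/
def histWeight : Equiv.Perm α → Equiv.Perm α → Equiv.Perm α → List α → Polynomial ℚ
  | _, _, _, [] => 1
  | b, w, e, s :: L =>
      edgeWeight b w s (e s) *
        histWeight (removeP b s (e s)) (removeP w s (e s)) (removeP e s (e s)) L

/-- `L` encodes a *history* (a linear order on the edges) of the map with edge-side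
set `S` and edge pairing `e`: it lists every edge exactly once, each edge being
represented by its smaller edge-side. -/
def IsHistory [LinearOrder α] (S : Finset α) (e : Equiv.Perm α) (L : List α) : Prop :=
  L.Nodup ∧ (∀ s ∈ L, s ∈ S ∧ s < e s) ∧ ∀ a ∈ S, a ∈ L ∨ e a ∈ L

/-- The *measure of non-orientability* `w_M` of the map `(S,b,w,e)`: the average of
`w_{M,≺}` over all `n!` histories `≺`, as a polynomial in the variable `γ` over `ℚ`. -/
def mapWeight [LinearOrder α] (S : Finset α) (b w e : Equiv.Perm α) : Polynomial ℚ :=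
  Polynomial.C (1 / ((numEdges S).factorial : ℚ)) *
    ∑ F ∈ (Fintype.piFinset fun _ : Fin (numEdges S) => S).filter
        (fun F => IsHistory S e (List.ofFn F)),
      histWeight b w e (List.ofFn F)

/-- The number of embeddings `N_M(λ)` of the underlying bipartite graph of the map
`(S,b,w,e)` into the Young diagram whose list of row lengths is `lam`: an embedding
maps black vertices (polygons of `L(b,e)`) to rows, white vertices (polygons of
`L(w,e)`) to columns, and each edge to the box at the corresponding intersection;
it is encoded by a pair of functions on edge-sides that are constant on vertices. -/
def NMap (lam : List ℕ) (S : Finset α) (b w e : Equiv.Perm α) : ℕ :=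
  Nat.card {fp : (α → ℕ) × (α → ℕ) //
    (∀ s, s ∉ S → fp.1 s = 0 ∧ fp.2 s = 0) ∧
    (∀ s ∈ S, fp.1 (b s) = fp.1 s ∧ fp.1 (e s) = fp.1 s) ∧
    (∀ s ∈ S, fp.2 (w s) = fp.2 s ∧ fp.2 (e s) = fp.2 s) ∧
    ∀ s ∈ S, fp.2 s < lam.getD (fp.1 s) 0}

/-- The orientability generating series `\widehat{Ch}^{(α)}_π(λ)`, where the face-type
`π` is realized by the fixed couple of pairings `(b,w)` of `S`, `lam` is the list of
row lengths of the Young diagram `λ`, and `a` is the Jack parameter `α`: the sum over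
all pairings `e` of `S` (i.e., over all maps of face-type `π`) of
`(-1/√α)^{|V_•(M)|} (√α)^{|V_∘(M)|} w_M N_M(λ)`, times the sign `(-1)^{ℓ(π)}`,
where `w_M` is evaluated at `γ = (1-α)/√α`. -/
def genSeries [Fintype α] [LinearOrder α] (lam : List ℕ) (S : Finset α)
    (b w : Equiv.Perm α) (a : ℝ) : ℝ :=
  (-1 : ℝ) ^ numFaces S b w *
    ∑ e ∈ Finset.univ.filter fun e : Equiv.Perm α => IsPairing S e,
      (-1 / Real.sqrt a) ^ numFaces S b e * (Real.sqrt a) ^ numFaces S w e *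
        Polynomial.aeval ((1 - a) / Real.sqrt a) (mapWeight S b w e) *
          (NMap lam S b w e : ℝ)

/-- The number of embeddings `N_G(λ)` of the bipartite graph `G` with black vertex set
`ι`, white vertex set `κ` and edge relation `Edg` into the Young diagram whose list of
row lengths is `lam`: black vertices are mapped to rows of `λ`, white vertices to
columns of `λ`, and every edge to the box at the corresponding intersection, which
must belong to `λ`. -/
def NGraph {ι κ : Type*} (lam : List ℕ) (Edg : ι → κ → Prop) : ℕ :=
  Nat.card {fp : (ι → ℕ) × (κ → ℕ) //
    (∀ u, 0 < lam.getD (fp.1 u) 0) ∧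
    (∀ v, ∃ i, fp.2 v < lam.getD i 0) ∧
    ∀ u v, Edg u v → fp.2 v < lam.getD (fp.1 u) 0}

namespace BridgeAux

lemma pair_mem {S : Finset α} {f : Equiv.Perm α} (hf : IsPairing S f) {x : α}
    (hx : x ∈ S) : f x ∈ S := by
  refine (hf.2 (f x)).mp ?_
  rw [hf.1 x]
  exact fun h => (hf.2 x).mpr hx h.symm

lemma pair_mul_self {S : Finset α} {f : Equiv.Perm α} (hf : IsPairing S f) : f * f = 1 :=
  Equiv.ext fun a => by simp [Equiv.Perm.mul_apply, hf.1 a]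

lemma pair_inv {S : Finset α} {f : Equiv.Perm α} (hf : IsPairing S f) : f⁻¹ = f :=
  inv_eq_of_mul_eq_one_right (pair_mul_self hf)

lemma conj_zpow_key {S : Finset α} {b w : Equiv.Perm α}
    (hb : IsPairing S b) (hw : IsPairing S w) (j : ℤ) :
    b * (w * b) ^ j = (w * b) ^ (-j) * b := by
  have h1 : b * (w * b) * b⁻¹ = (w * b)⁻¹ := by
    rw [mul_inv_rev, pair_inv hb, pair_inv hw,
      mul_assoc b (w * b) b, mul_assoc w b b, pair_mul_self hb, mul_one]
  calc b * (w * b) ^ j = b * (w * b) ^ j * b⁻¹ * b := by rw [inv_mul_cancel_right]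
    _ = (b * (w * b) * b⁻¹) ^ j * b := by rw [conj_zpow]
    _ = ((w * b)⁻¹) ^ j * b := by rw [h1]
    _ = (w * b) ^ (-j) * b := by rw [inv_zpow, ← zpow_neg]

lemma conj_apply {S : Finset α} {b w : Equiv.Perm α}
    (hb : IsPairing S b) (hw : IsPairing S w) (j : ℤ) (y : α) :
    b (((w * b) ^ j) y) = ((w * b) ^ (-j)) (b y) := by
  rw [← Equiv.Perm.mul_apply, conj_zpow_key hb hw, Equiv.Perm.mul_apply]

lemma zpow_mem {S : Finset α} {b w : Equiv.Perm α}
    (hb : IsPairing S b) (hw : IsPairing S w) (j : ℤ) {x : α} (hx : x ∈ S) :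
    ((w * b) ^ j) x ∈ S := by
  induction j using Int.induction_on with
  | zero => simpa using hx
  | succ i ih =>
      have h : ((w * b) ^ ((i : ℤ) + 1)) x = w (b (((w * b) ^ (i : ℤ)) x)) := by
        rw [add_comm, zpow_add, zpow_one, Equiv.Perm.mul_apply, Equiv.Perm.mul_apply]
      rw [h]
      exact pair_mem hw (pair_mem hb ih)
  | pred i ih =>
      have h : ((w * b) ^ (-(i : ℤ) - 1)) x = b (w (((w * b) ^ (-(i : ℤ))) x)) := by
        rw [show (-(i : ℤ) - 1) = (-1) + (-(i : ℤ)) by ring, zpow_add,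
          Equiv.Perm.mul_apply, zpow_neg_one, mul_inv_rev, pair_inv hb, pair_inv hw,
          Equiv.Perm.mul_apply]
      rw [h]
      exact pair_mem hb (pair_mem hw ih)

lemma zpow_move {c : Equiv.Perm α} {a : ℤ} {x y : α} (h : (c ^ a) x = y) :
    x = (c ^ (-a)) y := by
  rw [← h, ← Equiv.Perm.mul_apply, ← zpow_add]
  simp

lemma zpow_eq_of {c : Equiv.Perm α} {a b : ℤ} {x y : α} (h : (c ^ a) x = (c ^ b) y)
    {d : ℤ} (hd : d = b - a) : x = (c ^ d) y := by
  subst hd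
  rw [zpow_move h, ← Equiv.Perm.mul_apply, ← zpow_add, neg_add_eq_sub]

lemma cross_ne {S : Finset α} {b w : Equiv.Perm α}
    (hb : IsPairing S b) (hw : IsPairing S w) {x : α} (hx : x ∈ S) (r : ℤ) :
    b x ≠ ((w * b) ^ r) x := by
  intro hbx
  rcases Int.even_or_odd r with ⟨p, hp⟩ | ⟨p, hp⟩
  · have h1 : b (((w * b) ^ p) x) = ((w * b) ^ p) x := by
      rw [conj_apply hb hw, hbx, ← Equiv.Perm.mul_apply, ← zpow_add,
        show -p + r = p by omega]
    exact (hb.2 _).mpr (zpow_mem hb hw p hx) h1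
  · have hby : b (((w * b) ^ (p + 1)) x) = ((w * b) ^ p) x := by
      rw [conj_apply hb hw, hbx, ← Equiv.Perm.mul_apply, ← zpow_add,
        show -(p + 1) + r = p by omega]
    have h1 : w (((w * b) ^ (p + 1)) x) = ((w * b) ^ (p + 1)) x := by
      calc w (((w * b) ^ (p + 1)) x) = (w * b) (b (((w * b) ^ (p + 1)) x)) := by
            rw [Equiv.Perm.mul_apply, hb.1]
        _ = (w * b) (((w * b) ^ p) x) := by rw [hby]
        _ = ((w * b) ^ (p + 1)) x := by
            rw [← Equiv.Perm.mul_apply, ← zpow_one_add, add_comm 1 p]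
    exact (hw.2 _).mpr (zpow_mem hb hw _ hx) h1

lemma exists_minPeriod {S : Finset α} {b w : Equiv.Perm α}
    (hb : IsPairing S b) (hw : IsPairing S w) {p : α} (hp : p ∈ S) :
    ∃ n : ℕ, 0 < n ∧ ∀ j : ℤ, ((w * b) ^ j) p = p ↔ (n : ℤ) ∣ j := by
  have hexN : ∃ N : ℕ, 0 < N ∧ ((w * b) ^ (N : ℤ)) p = p := by
    obtain ⟨i, hi, j, hj, hij, hfeq⟩ :=
      Finset.exists_ne_map_eq_of_card_lt_of_maps_to (s := Finset.range (S.card + 1))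
        (t := S) (by simp) (fun a _ => zpow_mem hb hw (a : ℤ) hp)
    have key : ∀ i j : ℕ, i < j → ((w * b) ^ (i : ℤ)) p = ((w * b) ^ (j : ℤ)) p →
        ∃ N : ℕ, 0 < N ∧ ((w * b) ^ (N : ℤ)) p = p := by
      intro i j hlt heq
      exact ⟨j - i, by omega, (zpow_eq_of heq (by omega)).symm⟩
    rcases lt_or_gt_of_ne hij with h | h
    · exact key i j h hfeq
    · exact key j i h hfeq.symm
  have hexQ : ∃ n : ℕ, 0 < n ∧ ((w * b) ^ (n : ℤ)) p = p := hexN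
  refine ⟨Nat.find hexQ, (Nat.find_spec hexQ).1, ?_⟩
  set n := Nat.find hexQ with hndef
  have hn0 : 0 < n := (Nat.find_spec hexQ).1
  have hnp : ((w * b) ^ (n : ℤ)) p = p := (Nat.find_spec hexQ).2
  have hmul : ∀ q : ℤ, ((w * b) ^ ((n : ℤ) * q)) p = p := by
    intro q
    induction q using Int.induction_on with
    | zero => simp
    | succ i ih =>
        rw [show (n : ℤ) * ((i : ℤ) + 1) = (n : ℤ) * (i : ℤ) + (n : ℤ) by ring,
          zpow_add, Equiv.Perm.mul_apply, hnp, ih]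
    | pred i ih =>
        have hinv : ((w * b) ^ (-(n : ℤ))) p = p := (zpow_move hnp).symm
        rw [show (n : ℤ) * (-(i : ℤ) - 1) = (n : ℤ) * (-(i : ℤ)) + (-(n : ℤ)) by ring,
          zpow_add, Equiv.Perm.mul_apply, hinv, ih]
  intro j
  constructor
  · intro hj
    have hnz : (n : ℤ) ≠ 0 := by exact_mod_cast hn0.ne'
    have hmod : ((w * b) ^ (j % (n : ℤ))) p = p := by
      have h1 : ((w * b) ^ ((n : ℤ) * (j / (n : ℤ)))) p = p := hmul _
      have h3 : ((w * b) ^ j) p = ((w * b) ^ ((n : ℤ) * (j / (n : ℤ)))) p := by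
        rw [hj, h1]
      have h4 : p = ((w * b) ^ ((n : ℤ) * (j / (n : ℤ)) - j)) p := zpow_eq_of h3 rfl
      have h5 : (n : ℤ) * (j / (n : ℤ)) - j = -(j % (n : ℤ)) := by
        rw [Int.emod_def]; ring
      rw [h5] at h4
      have h6 := zpow_move h4.symm
      rw [neg_neg] at h6
      exact h6.symm
    by_cases hr : j % (n : ℤ) = 0
    · exact Int.dvd_of_emod_eq_zero hr
    · exfalso
      have hpos : 0 < j % (n : ℤ) :=
        lt_of_le_of_ne (Int.emod_nonneg j hnz) (Ne.symm hr)
      have hlt : j % (n : ℤ) < n := Int.emod_lt_of_pos j (by exact_mod_cast hn0)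
      have hQm : 0 < (j % (n : ℤ)).toNat ∧ ((w * b) ^ (((j % (n : ℤ)).toNat : ℕ) : ℤ)) p = p := by
        constructor
        · omega
        · rw [Int.toNat_of_nonneg (by omega)]; exact hmod
      exact Nat.find_min hexQ (by omega) hQm
  · rintro ⟨q, rfl⟩
    exact hmul q

lemma removeP_of_ne {f : Equiv.Perm α} {s t x : α} (h1 : x ≠ s) (h2 : x ≠ t)
    (h3 : f x ≠ s) (h4 : f x ≠ t) : removeP f s t x = f x := by
  have hfs : f x ≠ f s := fun h => h1 (f.injective h)
  have hft : f x ≠ f t := fun h => h2 (f.injective h)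
  simp only [removeP, Equiv.Perm.mul_apply]
  rw [Equiv.swap_apply_of_ne_of_ne h4 hfs, Equiv.swap_apply_of_ne_of_ne h3 hft,
    Equiv.swap_apply_of_ne_of_ne h3 h4]

lemma removeP_fst {f : Equiv.Perm α} {s t : α} (hf : ∀ a, f (f a) = a)
    (hst : s ≠ t) (h1 : f s ≠ s) (h2 : f s ≠ t) (h3 : f t ≠ t) :
    removeP f s t (f s) = f t := by
  have h4 : f t ≠ s := fun h => h2 (((congrArg f h).symm).trans (hf t))
  simp only [removeP, Equiv.Perm.mul_apply]
  rw [hf s, Equiv.swap_apply_of_ne_of_ne hst (Ne.symm h1), Equiv.swap_apply_left,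
    Equiv.swap_apply_of_ne_of_ne h4 h3]

lemma removeP_snd {f : Equiv.Perm α} {s t : α} (hf : ∀ a, f (f a) = a)
    (hst : s ≠ t) (h1 : f s ≠ s) (h2 : f s ≠ t) (h3 : f t ≠ t) :
    removeP f s t (f t) = f s := by
  have hft : f s ≠ f t := fun h => hst (f.injective h)
  simp only [removeP, Equiv.Perm.mul_apply]
  rw [hf t, Equiv.swap_apply_left, Equiv.swap_apply_of_ne_of_ne h1 hft,
    Equiv.swap_apply_of_ne_of_ne h1 h2]

lemma same_refl (b w e : Equiv.Perm α) (x : α) : SameComponent b w e x x :=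
  ⟨1, Subgroup.one_mem _, rfl⟩

lemma same_trans {b w e : Equiv.Perm α} {x y z : α}
    (h1 : SameComponent b w e x y) (h2 : SameComponent b w e y z) :
    SameComponent b w e x z := by
  obtain ⟨g, hg, hgx⟩ := h1
  obtain ⟨g', hg', hgy⟩ := h2
  exact ⟨g' * g, Subgroup.mul_mem _ hg' hg, by rw [Equiv.Perm.mul_apply, hgx, hgy]⟩

lemma same_fst {b w e : Equiv.Perm α} (x : α) : SameComponent b w e x (b x) :=
  ⟨b, Subgroup.subset_closure (Set.mem_insert _ _), rfl⟩

lemma same_snd {b w e : Equiv.Perm α} (x : α) : SameComponent b w e x (w x) :=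
  ⟨w, Subgroup.subset_closure (Set.mem_insert_of_mem _ (Set.mem_insert _ _)), rfl⟩

end BridgeAux

open BridgeAux

/-- Lemma `BridgeStraight`: a bridge of a map is always a
straight edge. -/
theorem bridge_is_straight (S : Finset α) (b w e : Equiv.Perm α)
    (hb : IsPairing S b) (hw : IsPairing S w) (he : IsPairing S e)
    (s : α) (hs : s ∈ S)
    (hbridge : IsBridge b w e s) :
    IsStraight b w s (e s) := by
  have hbridge' : (b s = e s ∨ w s = e s) ∨
      ¬ SameComponent (removeP b s (e s)) (removeP w s (e s)) (removeP e s (e s))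
        (b s) (w s) := hbridge
  have hes : e s ≠ s := (he.2 s).mpr hs
  by_cases hbs : b s = e s
  · have hE : EvenPos b w s (e s) := ⟨0, by simpa using hbs.symm⟩
    exact ⟨Or.inl hE, hE⟩
  by_cases hws : w s = e s
  · have hE : EvenPos b w s (e s) :=
      ⟨1, by simp only [zpow_one, Equiv.Perm.mul_apply, hb.1]; exact hws.symm⟩
    exact ⟨Or.inl hE, hE⟩
  by_contra hstraight
  have hnE : ¬ EvenPos b w s (e s) := fun h => hstraight ⟨Or.inl h, h⟩
  have hcomp : ¬ SameComponent (removeP b s (e s)) (removeP w s (e s)) (removeP e s (e s))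
      (b s) (w s) := by
    rcases hbridge' with (h | h) | h
    · exact absurd h hbs
    · exact absurd h hws
    · exact h
  apply hcomp
  set t := e s with ht
  have hst' : s ≠ t := fun h => hes h.symm
  have hts : t ∈ S := pair_mem he hs
  have hbsne : b s ≠ s := (hb.2 s).mpr hs
  have hwsne : w s ≠ s := (hw.2 s).mpr hs
  have hbtt : b t ≠ t := (hb.2 t).mpr hts
  have hwtt : w t ≠ t := (hw.2 t).mpr hts
  have hcross : ∀ {x : α}, x ∈ S → ∀ r : ℤ, b x ≠ ((w * b) ^ r) x :=
    fun hx r => cross_ne hb hw hx r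
  have happ : ∀ (j : ℤ) (y : α), w (b (((w * b) ^ j) y)) = ((w * b) ^ (j + 1)) y := by
    intro j y
    calc w (b (((w * b) ^ j) y)) = ((w * b) * (w * b) ^ j) y := rfl
      _ = ((w * b) ^ (j + 1)) y := by rw [← zpow_one_add, add_comm 1 j]
  by_cases hO : OddPos b w s t
  · -- twisted case: walk along the face of s
    obtain ⟨j0, hj0⟩ := hO
    obtain ⟨n, hn0, hdvd⟩ := exists_minPeriod hb hw hs
    have hnz : (n : ℤ) ≠ 0 := by exact_mod_cast hn0.ne'
    have hm0 : (0 : ℤ) ≤ j0 % (n : ℤ) := Int.emod_nonneg j0 hnz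
    have hmlt : j0 % (n : ℤ) < (n : ℤ) := Int.emod_lt_of_pos j0 (by exact_mod_cast hn0)
    set m : ℕ := (j0 % (n : ℤ)).toNat with hmdef
    have hmz : (m : ℤ) = j0 % (n : ℤ) := Int.toNat_of_nonneg hm0
    have hmn : m < n := by omega
    have htm : t = ((w * b) ^ (m : ℤ)) s := by
      have h1 : ((w * b) ^ ((n : ℤ) * (j0 / (n : ℤ)))) s = s := (hdvd _).mpr ⟨_, rfl⟩
      have hexp : j0 = (m : ℤ) + (n : ℤ) * (j0 / (n : ℤ)) := by
        rw [hmz]; exact (Int.emod_add_mul_ediv j0 (n : ℤ)).symm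
      rw [hj0, hexp, zpow_add, Equiv.Perm.mul_apply, h1]
    have walk : ∀ d k : ℕ, m ≤ k → k + d + 1 = n →
        SameComponent (removeP b s t) (removeP w s t) (removeP e s t)
          (b (((w * b) ^ (k : ℤ)) s)) (w s) := by
      intro d
      induction d with
      | zero =>
          intro k hmk hkn
          have h1 : ((w * b) ^ ((k : ℤ) + 1)) s = s :=
            (hdvd _).mpr ⟨1, by rw [mul_one]; omega⟩
          have h2 : ((w * b) ^ (k : ℤ)) s = b (w s) := by
            rw [show (k : ℤ) = -1 + ((k : ℤ) + 1) by ring, zpow_add,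
              Equiv.Perm.mul_apply, h1, zpow_neg_one, mul_inv_rev, pair_inv hb,
              pair_inv hw, Equiv.Perm.mul_apply]
          rw [h2, hb.1]
          exact same_refl _ _ _ _
      | succ d ih =>
          intro k hmk hkn
          have hk1 : k + 1 < n := by omega
          have hA1 : b (((w * b) ^ (k : ℤ)) s) ≠ s := by
            intro h
            have h2 := congrArg b h
            rw [hb.1] at h2
            exact hcross hs (k : ℤ) h2.symm
          have hA2 : b (((w * b) ^ (k : ℤ)) s) ≠ t := by
            intro h
            rw [htm, conj_apply hb hw] at h
            exact hcross hs ((m : ℤ) + (k : ℤ)) (zpow_eq_of h (by ring))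
          have hA3 : ((w * b) ^ ((k : ℤ) + 1)) s ≠ s := by
            intro h
            have hd := (hdvd _).mp h
            have := Int.le_of_dvd (by omega) hd
            omega
          have hA4 : ((w * b) ^ ((k : ℤ) + 1)) s ≠ t := by
            intro h
            rw [htm] at h
            have h2 : s = ((w * b) ^ ((m : ℤ) - ((k : ℤ) + 1))) s := zpow_eq_of h rfl
            have hd := (hdvd _).mp h2.symm
            rw [← dvd_neg, neg_sub] at hd
            have := Int.le_of_dvd (by omega) hd
            omega
          have hA5 : b (((w * b) ^ ((k : ℤ) + 1)) s) ≠ s := by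
            intro h
            have h2 := congrArg b h
            rw [hb.1] at h2
            exact hcross hs ((k : ℤ) + 1) h2.symm
          have hA6 : b (((w * b) ^ ((k : ℤ) + 1)) s) ≠ t := by
            intro h
            rw [htm, conj_apply hb hw] at h
            exact hcross hs ((m : ℤ) + ((k : ℤ) + 1)) (zpow_eq_of h (by ring))
          have e1 : (removeP w s t) (b (((w * b) ^ (k : ℤ)) s)) = ((w * b) ^ ((k : ℤ) + 1)) s := by
            rw [removeP_of_ne hA1 hA2 (by rw [happ]; exact hA3) (by rw [happ]; exact hA4), happ]
          have e2 : (removeP b s t) (((w * b) ^ ((k : ℤ) + 1)) s) = b (((w * b) ^ ((k : ℤ) + 1)) s) :=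
            removeP_of_ne hA3 hA4 hA5 hA6
          have ih' := ih (k + 1) (by omega) (by omega)
          rw [show ((k + 1 : ℕ) : ℤ) = (k : ℤ) + 1 by push_cast; ring] at ih'
          refine same_trans (y := ((w * b) ^ ((k : ℤ) + 1)) s) ?_
            (same_trans (y := b (((w * b) ^ ((k : ℤ) + 1)) s)) ?_ ih')
          · rw [← e1]; exact same_snd _
          · rw [← e2]; exact same_fst _
    have h0 : (removeP b s t) (b s) = b t := removeP_fst hb.1 hst' hbsne hbs hbtt
    have c0 : SameComponent (removeP b s t) (removeP w s t) (removeP e s t) (b s) (b t) := by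
      rw [← h0]; exact same_fst _
    have cw := walk (n - 1 - m) m le_rfl (by omega)
    rw [← htm] at cw
    exact same_trans c0 cw
  · -- interface case: walk along the face of t
    have hnO : ∀ j : ℤ, t ≠ ((w * b) ^ j) s := fun j hj => hO ⟨j, hj⟩
    have hnE' : ∀ j : ℤ, t ≠ ((w * b) ^ j) (b s) := fun j hj =>
      hnE ⟨j, by rw [Equiv.Perm.mul_apply]; exact hj⟩
    obtain ⟨n, hn0, hdvd⟩ := exists_minPeriod hb hw hts
    have walk : ∀ d k : ℕ, k + d + 1 = n →
        SameComponent (removeP b s t) (removeP w s t) (removeP e s t)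
          (b (((w * b) ^ (k : ℤ)) t)) (w t) := by
      intro d
      induction d with
      | zero =>
          intro k hkn
          have h1 : ((w * b) ^ ((k : ℤ) + 1)) t = t :=
            (hdvd _).mpr ⟨1, by rw [mul_one]; omega⟩
          have h2 : ((w * b) ^ (k : ℤ)) t = b (w t) := by
            rw [show (k : ℤ) = -1 + ((k : ℤ) + 1) by ring, zpow_add,
              Equiv.Perm.mul_apply, h1, zpow_neg_one, mul_inv_rev, pair_inv hb,
              pair_inv hw, Equiv.Perm.mul_apply]
          rw [h2, hb.1]
          exact same_refl _ _ _ _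
      | succ d ih =>
          intro k hkn
          have hk1 : k + 1 < n := by omega
          have hB1 : b (((w * b) ^ (k : ℤ)) t) ≠ s := by
            intro h
            have h2 := congrArg b h
            rw [hb.1] at h2
            exact hnE' (-(k : ℤ)) (zpow_move h2)
          have hB2 : b (((w * b) ^ (k : ℤ)) t) ≠ t := by
            intro h
            rw [conj_apply hb hw] at h
            have h2 := zpow_move h
            rw [neg_neg] at h2
            exact hcross hts (k : ℤ) h2
          have hB3 : ((w * b) ^ ((k : ℤ) + 1)) t ≠ s := by
            intro h
            exact hnO (-((k : ℤ) + 1)) (zpow_move h)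
          have hB4 : ((w * b) ^ ((k : ℤ) + 1)) t ≠ t := by
            intro h
            have hd := (hdvd _).mp h
            have := Int.le_of_dvd (by omega) hd
            omega
          have hB5 : b (((w * b) ^ ((k : ℤ) + 1)) t) ≠ s := by
            intro h
            have h2 := congrArg b h
            rw [hb.1] at h2
            exact hnE' (-((k : ℤ) + 1)) (zpow_move h2)
          have hB6 : b (((w * b) ^ ((k : ℤ) + 1)) t) ≠ t := by
            intro h
            rw [conj_apply hb hw] at h
            have h2 := zpow_move h
            rw [neg_neg] at h2
            exact hcross hts ((k : ℤ) + 1) h2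
          have e1 : (removeP w s t) (b (((w * b) ^ (k : ℤ)) t)) = ((w * b) ^ ((k : ℤ) + 1)) t := by
            rw [removeP_of_ne hB1 hB2 (by rw [happ]; exact hB3) (by rw [happ]; exact hB4), happ]
          have e2 : (removeP b s t) (((w * b) ^ ((k : ℤ) + 1)) t) = b (((w * b) ^ ((k : ℤ) + 1)) t) :=
            removeP_of_ne hB3 hB4 hB5 hB6
          have ih' := ih (k + 1) (by omega)
          rw [show ((k + 1 : ℕ) : ℤ) = (k : ℤ) + 1 by push_cast; ring] at ih'
          refine same_trans (y := ((w * b) ^ ((k : ℤ) + 1)) t) ?_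
            (same_trans (y := b (((w * b) ^ ((k : ℤ) + 1)) t)) ?_ ih')
          · rw [← e1]; exact same_snd _
          · rw [← e2]; exact same_fst _
    have h0 : (removeP b s t) (b s) = b t := removeP_fst hb.1 hst' hbsne hbs hbtt
    have c0 : SameComponent (removeP b s t) (removeP w s t) (removeP e s t) (b s) (b t) := by
      rw [← h0]; exact same_fst _
    have cw := walk (n - 1) 0 (by omega)
    rw [show ((0 : ℕ) : ℤ) = (0 : ℤ) by norm_num, zpow_zero] at cw
    simp only [Equiv.Perm.one_apply] at cw
    have h1 : (removeP w s t) (w t) = w s := removeP_snd hw.1 hst' hwsne hws hwtt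
    have c2 : SameComponent (removeP b s t) (removeP w s t) (removeP e s t) (w t) (w s) := by
      rw [← h1]; exact same_snd _
    exact same_trans c0 (same_trans cw c2)

end
end

section
/- Let M be a map and let E0 = {s1,s2} be a straight edge of M whose edge-sides lie in a face F of M, with 2i edge-sides between s1 and s2 in one direction around F and 2j edge-sides in the other direction (so F has size 2i+2j+2). Then the faces of M \ E0 are obtained from the faces of M by replacing F by two faces of sizes 2i and 2j (where a face of size 0 is omitted), all other faces of M being unchanged. -/
open Equiv Polynomial

open scoped Classical

noncomputable section

variable {α : Type*}

lemma pair_mem {S : Finset α} {f : Equiv.Perm α} (hf : IsPairing S f) {a : α}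
    (ha : a ∈ S) : f a ∈ S := by
  refine (hf.2 (f a)).1 ?_
  have h1 : f a ≠ a := (hf.2 a).2 ha
  rw [hf.1 a]
  exact fun h => h1 h.symm

lemma invol_inv {f : Equiv.Perm α} (hf : ∀ a, f (f a) = a) : f⁻¹ = f := by
  have : f * f = 1 := Equiv.ext fun a => hf a
  exact inv_eq_of_mul_eq_one_right this

lemma bconj {b w : Equiv.Perm α} (hb : ∀ a, b (b a) = a) (hw : ∀ a, w (w a) = a)
    (m : ℤ) : b * (w * b) ^ m = (w * b) ^ (-m) * b := by
  have hbi := invol_inv hb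
  have hwi := invol_inv hw
  have hb1 : b * b = 1 := Equiv.ext fun a => hb a
  have key : b * (w * b) * b⁻¹ = (w * b)⁻¹ := by
    rw [hbi, mul_inv_rev, hbi, hwi, mul_assoc b (w*b) b, mul_assoc w b b, hb1, mul_one]
  have h2 : (b * (w*b) * b⁻¹)^m = b * (w*b)^m * b⁻¹ := conj_zpow
  rw [key] at h2
  have h3 : ((w*b)⁻¹)^m * b = b * (w*b)^m * b⁻¹ * b := by rw [h2]
  rw [inv_mul_cancel_right] at h3
  rw [← h3, inv_zpow']

lemma wconj {b w : Equiv.Perm α} (hb : ∀ a, b (b a) = a) (hw : ∀ a, w (w a) = a)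
    (m : ℤ) : w * (w * b) ^ m = (w * b) ^ (-m) * w := by
  have hbi := invol_inv hb
  have hwi := invol_inv hw
  have hw1 : w * w = 1 := Equiv.ext fun a => hw a
  have key : w * (w * b) * w⁻¹ = (w * b)⁻¹ := by
    rw [hwi, mul_inv_rev, hbi, hwi, ← mul_assoc, hw1, one_mul]
  have h2 : (w * (w*b) * w⁻¹)^m = w * (w*b)^m * w⁻¹ := conj_zpow
  rw [key] at h2
  have h3 : ((w*b)⁻¹)^m * w = w * (w*b)^m * w⁻¹ * w := by rw [h2]
  rw [inv_mul_cancel_right] at h3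
  rw [← h3, inv_zpow']

lemma bconj_apply {b w : Equiv.Perm α} (hb : ∀ a, b (b a) = a) (hw : ∀ a, w (w a) = a)
    (m : ℤ) (a : α) : b (((w * b) ^ m) a) = ((w * b) ^ (-m)) (b a) := by
  rw [← Equiv.Perm.mul_apply, bconj hb hw, Equiv.Perm.mul_apply]

lemma wconj_apply {b w : Equiv.Perm α} (hb : ∀ a, b (b a) = a) (hw : ∀ a, w (w a) = a)
    (m : ℤ) (a : α) : w (((w * b) ^ m) a) = ((w * b) ^ (-m)) (w a) := by
  rw [← Equiv.Perm.mul_apply, wconj hb hw, Equiv.Perm.mul_apply]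

lemma evenPos_iff {b w : Equiv.Perm α} {s t : α} :
    EvenPos b w s t ↔ ∃ m : ℤ, t = ((w * b) ^ m) (b s) := by
  unfold EvenPos
  simp [Equiv.Perm.mul_apply]

lemma oddPos_refl {b w : Equiv.Perm α} (s : α) : OddPos b w s s := ⟨0, by simp⟩

lemma sameFace_refl {b w : Equiv.Perm α} (s : α) : SameFace b w s s :=
  Or.inr (oddPos_refl s)

lemma sameFace_b {b w : Equiv.Perm α} (s : α) : SameFace b w s (b s) :=
  Or.inl ⟨0, by simp⟩

lemma sameFace_w {b w : Equiv.Perm α} (hb : ∀ a, b (b a) = a) (s : α) :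
    SameFace b w s (w s) := by
  refine Or.inl ⟨1, ?_⟩
  rw [zpow_one, Equiv.Perm.mul_apply, Equiv.Perm.mul_apply, hb]

lemma oddPos_symm {b w : Equiv.Perm α} {s t : α} (h : OddPos b w s t) : OddPos b w t s := by
  obtain ⟨m, rfl⟩ := h
  exact ⟨-m, by rw [← Equiv.Perm.mul_apply, ← zpow_add, neg_add_cancel, zpow_zero,
    Equiv.Perm.one_apply]⟩

lemma evenPos_symm {b w : Equiv.Perm α} (hb : ∀ a, b (b a) = a) (hw : ∀ a, w (w a) = a)
    {s t : α} (h : EvenPos b w s t) : EvenPos b w t s := by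
  rw [evenPos_iff] at h ⊢
  obtain ⟨m, rfl⟩ := h
  refine ⟨m, ?_⟩
  rw [bconj_apply hb hw, ← Equiv.Perm.mul_apply, ← zpow_add, add_neg_cancel, zpow_zero,
    Equiv.Perm.one_apply, hb]

lemma sameFace_symm {b w : Equiv.Perm α} (hb : ∀ a, b (b a) = a) (hw : ∀ a, w (w a) = a)
    {s t : α} (h : SameFace b w s t) : SameFace b w t s :=
  h.elim (fun h' => Or.inl (evenPos_symm hb hw h')) fun h' => Or.inr (oddPos_symm h')

lemma odd_odd_trans {b w : Equiv.Perm α} {s t u : α} (h1 : OddPos b w s t)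
    (h2 : OddPos b w t u) : OddPos b w s u := by
  obtain ⟨m, rfl⟩ := h1; obtain ⟨n, rfl⟩ := h2
  exact ⟨n + m, by rw [← Equiv.Perm.mul_apply, ← zpow_add]⟩

lemma odd_even_trans {b w : Equiv.Perm α} (hb : ∀ a, b (b a) = a) (hw : ∀ a, w (w a) = a)
    {s t u : α} (h1 : OddPos b w s t) (h2 : EvenPos b w t u) : EvenPos b w s u := by
  rw [evenPos_iff] at h2 ⊢
  obtain ⟨m, rfl⟩ := h1; obtain ⟨n, rfl⟩ := h2
  refine ⟨n + -m, ?_⟩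
  rw [bconj_apply hb hw, ← Equiv.Perm.mul_apply, ← zpow_add]

lemma even_odd_trans {b w : Equiv.Perm α} {s t u : α} (h1 : EvenPos b w s t)
    (h2 : OddPos b w t u) : EvenPos b w s u := by
  rw [evenPos_iff] at h1 ⊢
  obtain ⟨m, rfl⟩ := h1; obtain ⟨n, rfl⟩ := h2
  exact ⟨n + m, by rw [← Equiv.Perm.mul_apply, ← zpow_add]⟩

lemma even_even_trans {b w : Equiv.Perm α} (hb : ∀ a, b (b a) = a) (hw : ∀ a, w (w a) = a)
    {s t u : α} (h1 : EvenPos b w s t) (h2 : EvenPos b w t u) : OddPos b w s u := by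
  rw [evenPos_iff] at h1 h2
  obtain ⟨m, rfl⟩ := h1; obtain ⟨n, rfl⟩ := h2
  refine ⟨n + -m, ?_⟩
  rw [bconj_apply hb hw, hb, ← Equiv.Perm.mul_apply, ← zpow_add]

lemma sameFace_trans {b w : Equiv.Perm α} (hb : ∀ a, b (b a) = a) (hw : ∀ a, w (w a) = a)
    {s t u : α} (h1 : SameFace b w s t) (h2 : SameFace b w t u) : SameFace b w s u := by
  rcases h1 with h1 | h1 <;> rcases h2 with h2 | h2
  · exact Or.inr (even_even_trans hb hw h1 h2)
  · exact Or.inl (even_odd_trans h1 h2)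
  · exact Or.inl (odd_even_trans hb hw h1 h2)
  · exact Or.inr (odd_odd_trans h1 h2)

lemma bw_pow_w {b w : Equiv.Perm α} (hb : ∀ a, b (b a) = a) (hw : ∀ a, w (w a) = a)
    (n : ℤ) : (b * w) ^ n * w = (w * b) ^ (1 - n) * b := by
  have hbw : (b * w : Equiv.Perm α) = (w * b)⁻¹ := by
    rw [mul_inv_rev, invol_inv hb, invol_inv hw]
  have hb1 : b * b = 1 := Equiv.ext fun a => hb a
  rw [hbw, inv_zpow', show (1 : ℤ) - n = -n + 1 by ring, zpow_add_one,
    mul_assoc, mul_assoc, hb1, mul_one]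

lemma oddPos_comm {b w : Equiv.Perm α} (hb : ∀ a, b (b a) = a) (hw : ∀ a, w (w a) = a)
    {s t : α} (h : OddPos b w s t) : OddPos w b s t := by
  obtain ⟨m, rfl⟩ := h
  refine ⟨-m, ?_⟩
  have hbw : (b * w : Equiv.Perm α) = (w * b)⁻¹ := by
    rw [mul_inv_rev, invol_inv hb, invol_inv hw]
  rw [hbw, inv_zpow', neg_neg]

lemma evenPos_comm {b w : Equiv.Perm α} (hb : ∀ a, b (b a) = a) (hw : ∀ a, w (w a) = a)
    {s t : α} (h : EvenPos b w s t) : EvenPos w b s t := by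
  obtain ⟨m, rfl⟩ := h
  refine ⟨1 - m, ?_⟩
  rw [bw_pow_w hb hw]
  rw [show (1 : ℤ) - (1 - m) = m by ring]

lemma sameFace_comm {b w : Equiv.Perm α} (hb : ∀ a, b (b a) = a) (hw : ∀ a, w (w a) = a)
    {s t : α} (h : SameFace b w s t) : SameFace w b s t :=
  h.elim (fun h' => Or.inl (evenPos_comm hb hw h')) fun h' => Or.inr (oddPos_comm hb hw h')

lemma removeP_apply {f : Equiv.Perm α} (hf : ∀ a, f (f a) = a) {s₁ s₂ : α}
    (h12 : s₁ ≠ s₂) (h1 : f s₁ ≠ s₁) (h2 : f s₂ ≠ s₂) (t : α) :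
    removeP f s₁ s₂ t =
      if t = s₁ then s₁ else if t = s₂ then s₂ else
      if t = f s₁ then f s₂ else if t = f s₂ then f s₁ else f t := by
  have hinj : Function.Injective f := fun x y h => by rw [← hf x, h, hf]
  have hff : ∀ x y : α, f x = y ↔ x = f y := by
    intro x y
    constructor
    · rintro rfl; exact (hf x).symm
    · rintro rfl; exact hf y
  simp only [removeP, Equiv.Perm.mul_apply]
  by_cases ht1 : t = s₁
  · subst ht1
    rw [if_pos rfl, Equiv.swap_apply_right, Equiv.swap_apply_of_ne_of_ne h12.symm
      (Ne.symm h2), Equiv.swap_apply_right]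
  · rw [if_neg ht1]
    by_cases ht2 : t = s₂
    · subst ht2
      rw [if_pos rfl, Equiv.swap_apply_of_ne_of_ne h2 (fun h => h12 (hinj h).symm),
        Equiv.swap_apply_right, Equiv.swap_apply_left]
    · rw [if_neg ht2]
      by_cases ht3 : t = f s₁
      · subst ht3
        rw [if_pos rfl, hf, Equiv.swap_apply_of_ne_of_ne h12 (Ne.symm h1),
          Equiv.swap_apply_left,
          Equiv.swap_apply_of_ne_of_ne (fun h : f s₂ = s₁ => ht2 (by rw [← h, hf])) h2]
      · rw [if_neg ht3]
        by_cases ht4 : t = f s₂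
        · subst ht4
          rw [if_pos rfl, hf, Equiv.swap_apply_left,
            Equiv.swap_apply_of_ne_of_ne h1 (fun h => h12 (hinj h)),
            Equiv.swap_apply_of_ne_of_ne h1 (fun h => ht1 (by rw [← hf s₁, h]))]
        · rw [if_neg ht4]
          have k1 : f t ≠ s₂ := fun h => ht4 (by rw [← h, hf])
          have k2 : f t ≠ f s₁ := fun h => ht1 (hinj h)
          have k3 : f t ≠ s₁ := fun h => ht3 (by rw [← h, hf])
          have k4 : f t ≠ f s₂ := fun h => ht2 (hinj h)
          rw [Equiv.swap_apply_of_ne_of_ne k1 k2, Equiv.swap_apply_of_ne_of_ne k3 k4,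
            Equiv.swap_apply_of_ne_of_ne k3 k1]

lemma removeP_invol {f : Equiv.Perm α} (hf : ∀ a, f (f a) = a) {s₁ s₂ : α}
    (h12 : s₁ ≠ s₂) (h1 : f s₁ ≠ s₁) (h2 : f s₂ ≠ s₂) (t : α) :
    removeP f s₁ s₂ (removeP f s₁ s₂ t) = t := by
  have hinj : Function.Injective f := fun x y h => by rw [← hf x, h, hf]
  rw [removeP_apply hf h12 h1 h2, removeP_apply hf h12 h1 h2]
  by_cases ht1 : t = s₁
  · subst ht1; simp
  · by_cases ht2 : t = s₂
    · subst ht2; simp [Ne.symm h12]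
    · rw [if_neg ht1, if_neg ht2]
      by_cases ht3 : t = f s₁
      · subst ht3
        have e1 : f s₂ ≠ s₁ := fun h => ht2 (by rw [← hf s₂, h])
        have e2 : f s₂ ≠ f s₁ := fun h => h12 ((hinj h).symm)
        rw [if_pos rfl, if_neg e1, if_neg h2, if_neg e2, if_pos rfl]
      · rw [if_neg ht3]
        by_cases ht4 : t = f s₂
        · subst ht4
          have e1 : f s₁ ≠ s₂ := fun h => ht1 (by rw [← hf s₁, h])
          rw [if_pos rfl, if_neg h1, if_neg e1, if_pos rfl]
        · rw [if_neg ht4]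
          have k1 : f t ≠ s₂ := fun h => ht4 (by rw [← h, hf])
          have k2 : f t ≠ f s₁ := fun h => ht1 (hinj h)
          have k3 : f t ≠ s₁ := fun h => ht3 (by rw [← h, hf])
          have k4 : f t ≠ f s₂ := fun h => ht2 (hinj h)
          rw [if_neg k3, if_neg k1, if_neg k2, if_neg k4, hf]

def facePt (b w : Equiv.Perm α) (s₁ : α) (n : ℕ) : α :=
  if n % 2 = 0 then ((w * b) ^ ((n / 2 : ℕ) : ℤ)) s₁
  else ((w * b) ^ (-((n / 2 : ℕ) : ℤ))) (b s₁)

lemma facePt_even (b w : Equiv.Perm α) (s₁ : α) (k : ℕ) :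
    facePt b w s₁ (2 * k) = ((w * b) ^ (k : ℤ)) s₁ := by
  simp [facePt, Nat.mul_div_cancel_left, Nat.mul_mod_right]

lemma facePt_odd (b w : Equiv.Perm α) (s₁ : α) (k : ℕ) :
    facePt b w s₁ (2 * k + 1) = ((w * b) ^ (-(k : ℤ))) (b s₁) := by
  have h1 : (2 * k + 1) % 2 = 1 := by omega
  have h2 : (2 * k + 1) / 2 = k := by omega
  simp [facePt, h1, h2]

lemma facePt_zero (b w : Equiv.Perm α) (s₁ : α) : facePt b w s₁ 0 = s₁ := by
  simpa using facePt_even b w s₁ 0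

lemma facePt_step_b {b w : Equiv.Perm α} (hb : ∀ a, b (b a) = a) (hw : ∀ a, w (w a) = a)
    (s₁ : α) (k : ℕ) : b (facePt b w s₁ (2 * k)) = facePt b w s₁ (2 * k + 1) := by
  rw [facePt_even, facePt_odd, bconj_apply hb hw]

lemma facePt_step_w {b w : Equiv.Perm α} (hb : ∀ a, b (b a) = a) (hw : ∀ a, w (w a) = a)
    (s₁ : α) (k : ℕ) : w (facePt b w s₁ (2 * k + 1)) = facePt b w s₁ (2 * k + 2) := by
  have h2 : 2 * k + 2 = 2 * (k + 1) := by ring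
  rw [facePt_odd, h2, facePt_even, wconj_apply hb hw, neg_neg]
  have hwb : w (b s₁) = (w * b) s₁ := rfl
  rw [hwb, ← Equiv.Perm.mul_apply, ← zpow_add_one]
  norm_num

lemma facePt_step_b' {b w : Equiv.Perm α} (hb : ∀ a, b (b a) = a) (hw : ∀ a, w (w a) = a)
    (s₁ : α) (k : ℕ) : b (facePt b w s₁ (2 * k + 1)) = facePt b w s₁ (2 * k) := by
  rw [← facePt_step_b hb hw, hb]

lemma facePt_step_w' {b w : Equiv.Perm α} (hb : ∀ a, b (b a) = a) (hw : ∀ a, w (w a) = a)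
    (s₁ : α) (k : ℕ) : w (facePt b w s₁ (2 * k + 2)) = facePt b w s₁ (2 * k + 1) := by
  rw [← facePt_step_w hb hw, hw]

lemma facePt_sameFace {b w : Equiv.Perm α} (s₁ : α) (n : ℕ) :
    SameFace b w s₁ (facePt b w s₁ n) := by
  rcases Nat.even_or_odd n with ⟨k, hk⟩ | ⟨k, hk⟩
  · subst hk
    rw [show k + k = 2 * k by ring, facePt_even]
    exact Or.inr ⟨k, rfl⟩
  · subst hk
    rw [facePt_odd]
    exact Or.inl (evenPos_iff.2 ⟨-(k : ℤ), rfl⟩)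

lemma zpow_closed {b w : Equiv.Perm α} (hb : ∀ a, b (b a) = a) (hw : ∀ a, w (w a) = a)
    {A : Set α} (hA : ∀ u ∈ A, b u ∈ A ∧ w u ∈ A) (m : ℤ) {a : α} (ha : a ∈ A) :
    ((w * b) ^ m) a ∈ A := by
  have hbw : ((w * b)⁻¹ : Equiv.Perm α) = b * w := by
    rw [mul_inv_rev, invol_inv hb, invol_inv hw]
  induction m using Int.induction_on with
  | zero => simpa using ha
  | succ n ih =>
      have : ((w * b) ^ ((n : ℤ) + 1)) a = w (b (((w * b) ^ (n : ℤ)) a)) := by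
        rw [show ((n : ℤ) + 1) = 1 + (n : ℤ) by ring, zpow_one_add, Equiv.Perm.mul_apply,
          Equiv.Perm.mul_apply]
      rw [this]
      exact (hA _ ((hA _ ih).1)).2
  | pred n ih =>
      have : ((w * b) ^ (-(n : ℤ) - 1)) a = b (w (((w * b) ^ (-(n : ℤ))) a)) := by
        rw [show (-(n : ℤ) - 1) = -1 + -(n : ℤ) by ring, zpow_add, zpow_neg_one, hbw,
          Equiv.Perm.mul_apply, Equiv.Perm.mul_apply]
      rw [this]
      exact (hA _ ((hA _ ih).2)).1

lemma orbit_closed {b w : Equiv.Perm α} (hb : ∀ a, b (b a) = a) (hw : ∀ a, w (w a) = a)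
    {A : Set α} (hA : ∀ u ∈ A, b u ∈ A ∧ w u ∈ A) {t : α} (ht : t ∈ A) {u : α}
    (hu : SameFace b w t u) : u ∈ A := by
  rcases hu with hu | hu
  · rw [evenPos_iff] at hu
    obtain ⟨m, rfl⟩ := hu
    exact zpow_closed hb hw hA m (hA _ ht).1
  · obtain ⟨m, rfl⟩ := hu
    exact zpow_closed hb hw hA m ht

lemma sameFace_congr {b w b' w' : Equiv.Perm α}
    (hb : ∀ a, b (b a) = a) (hw : ∀ a, w (w a) = a)
    (hb' : ∀ a, b' (b' a) = a) (hw' : ∀ a, w' (w' a) = a)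
    {t : α} (hagree : ∀ u, SameFace b w t u → b' u = b u ∧ w' u = w u) (u : α) :
    SameFace b w t u ↔ SameFace b' w' t u := by
  have key : ∀ m : ℤ, ∀ a, SameFace b w t a →
      ((w' * b') ^ m) a = ((w * b) ^ m) a ∧ SameFace b w t (((w * b) ^ m) a) := by
    intro m
    induction m using Int.induction_on with
    | zero => intro a ha; simpa using ha
    | succ n ih =>
        intro a ha
        obtain ⟨ih1, ih2⟩ := ih a ha
        have e1 : ((w' * b') ^ ((n : ℤ) + 1)) a = w' (b' (((w' * b') ^ (n : ℤ)) a)) := by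
          rw [show ((n : ℤ) + 1) = 1 + (n : ℤ) by ring, zpow_one_add, Equiv.Perm.mul_apply,
            Equiv.Perm.mul_apply]
        have e2 : ((w * b) ^ ((n : ℤ) + 1)) a = w (b (((w * b) ^ (n : ℤ)) a)) := by
          rw [show ((n : ℤ) + 1) = 1 + (n : ℤ) by ring, zpow_one_add, Equiv.Perm.mul_apply,
            Equiv.Perm.mul_apply]
        set v := ((w * b) ^ (n : ℤ)) a with hv
        have hbv : SameFace b w t (b v) := sameFace_trans hb hw ih2 (sameFace_b v)
        constructor
        · rw [e1, e2, ih1, (hagree v ih2).1, (hagree (b v) hbv).2]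
        · rw [e2]
          exact sameFace_trans hb hw hbv (sameFace_w hb (b v))
    | pred n ih =>
        intro a ha
        obtain ⟨ih1, ih2⟩ := ih a ha
        have hbw : ((w * b)⁻¹ : Equiv.Perm α) = b * w := by
          rw [mul_inv_rev, invol_inv hb, invol_inv hw]
        have hbw' : ((w' * b')⁻¹ : Equiv.Perm α) = b' * w' := by
          rw [mul_inv_rev, invol_inv hb', invol_inv hw']
        have e1 : ((w' * b') ^ (-(n : ℤ) - 1)) a = b' (w' (((w' * b') ^ (-(n : ℤ))) a)) := by
          rw [show (-(n : ℤ) - 1) = -1 + -(n : ℤ) by ring, zpow_add, zpow_neg_one, hbw',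
            Equiv.Perm.mul_apply, Equiv.Perm.mul_apply]
        have e2 : ((w * b) ^ (-(n : ℤ) - 1)) a = b (w (((w * b) ^ (-(n : ℤ))) a)) := by
          rw [show (-(n : ℤ) - 1) = -1 + -(n : ℤ) by ring, zpow_add, zpow_neg_one, hbw,
            Equiv.Perm.mul_apply, Equiv.Perm.mul_apply]
        set v := ((w * b) ^ (-(n : ℤ))) a with hv
        have hwv : SameFace b w t (w v) := sameFace_trans hb hw ih2 (sameFace_w hb v)
        constructor
        · rw [e1, e2, ih1, (hagree v ih2).2, (hagree (w v) hwv).1]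
        · rw [e2]
          exact sameFace_trans hb hw hwv (sameFace_b (w v))
  have hbt : b' t = b t := (hagree t (sameFace_refl t)).1
  have keyt : ∀ m : ℤ, ((w' * b') ^ m) t = ((w * b) ^ m) t :=
    fun m => (key m t (sameFace_refl t)).1
  have keybt : ∀ m : ℤ, ((w' * b') ^ m) (b t) = ((w * b) ^ m) (b t) :=
    fun m => (key m (b t) (sameFace_b t)).1
  constructor
  · rintro (he | ho)
    · rw [evenPos_iff] at he
      obtain ⟨m, hm⟩ := he
      refine Or.inl (evenPos_iff.2 ⟨m, ?_⟩)
      rw [hm, hbt, keybt]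
    · obtain ⟨m, hm⟩ := ho
      exact Or.inr ⟨m, by rw [hm, keyt]⟩
  · rintro (he | ho)
    · rw [evenPos_iff] at he
      obtain ⟨m, hm⟩ := he
      refine Or.inl (evenPos_iff.2 ⟨m, ?_⟩)
      rw [hm, hbt, keybt]
    · obtain ⟨m, hm⟩ := ho
      exact Or.inr ⟨m, by rw [hm, keyt]⟩

lemma faceOf_congr {S : Finset α} {b w : Equiv.Perm α}
    (hb : ∀ a, b (b a) = a) (hw : ∀ a, w (w a) = a) {s t : α}
    (h : SameFace b w s t) : faceOf S b w s = faceOf S b w t := by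
  unfold faceOf
  apply Finset.filter_congr
  intro u _
  exact ⟨fun h' => sameFace_trans hb hw (sameFace_symm hb hw h) h',
    fun h' => sameFace_trans hb hw h h'⟩

lemma zpow_period {g : Equiv.Perm α} {N : ℤ} {a : α} (ha : (g ^ N) a = a)
    {m m' : ℤ} (h : m % N = m' % N) : (g ^ m) a = (g ^ m') a := by
  have hq : ∀ q : ℤ, (g ^ (N * q)) a = a := by
    intro q
    induction q using Int.induction_on with
    | zero => simp
    | succ n ih =>
        have : g ^ (N * ((n : ℤ) + 1)) = g ^ (N * (n : ℤ)) * g ^ N := by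
          rw [← zpow_add]; ring_nf
        rw [this, Equiv.Perm.mul_apply, ha, ih]
    | pred n ih =>
        have hainv : (g ^ (-N)) a = a := by
          have h0 := congrArg (⇑(g ^ (-N))) ha
          rw [← Equiv.Perm.mul_apply, ← zpow_add, neg_add_cancel, zpow_zero,
            Equiv.Perm.one_apply] at h0
          exact h0.symm
        have : g ^ (N * (-(n : ℤ) - 1)) = g ^ (N * (-(n : ℤ))) * g ^ (-N) := by
          rw [← zpow_add]; ring_nf
        rw [this, Equiv.Perm.mul_apply, hainv, ih]
  have hd : m = m % N + N * (m / N) := by rw [add_comm]; exact (Int.mul_ediv_add_emod m N).symm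
  have hd' : m' = m' % N + N * (m' / N) := by rw [add_comm]; exact (Int.mul_ediv_add_emod m' N).symm
  have hm : (g ^ m) a = (g ^ (m % N)) a := by
    conv_lhs => rw [hd]
    rw [zpow_add, Equiv.Perm.mul_apply, hq]
  have hm' : (g ^ m') a = (g ^ (m' % N)) a := by
    conv_lhs => rw [hd']
    rw [zpow_add, Equiv.Perm.mul_apply, hq]
  rw [hm, hm', h]

lemma facePt_mem {S : Finset α} {b w : Equiv.Perm α} (hb : IsPairing S b)
    (hw : IsPairing S w) {s₁ : α} (hs₁ : s₁ ∈ S) (n : ℕ) : facePt b w s₁ n ∈ S := by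
  have hA : ∀ u ∈ (S : Set α), b u ∈ (S : Set α) ∧ w u ∈ (S : Set α) := by
    intro u hu
    exact ⟨pair_mem hb hu, pair_mem hw hu⟩
  unfold facePt
  split
  · exact zpow_closed hb.1 hw.1 hA _ hs₁
  · exact zpow_closed hb.1 hw.1 hA _ (pair_mem hb hs₁)

lemma periodicity {S : Finset α} {b w : Equiv.Perm α} (hb : IsPairing S b)
    (hw : IsPairing S w) {s₁ s₂ : α} {i j : ℕ}
    (hi : s₂ = (b * (w * b) ^ i) s₁) (hj : s₂ = (w * (b * w) ^ j) s₁) :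
    ((w * b) ^ ((i + j + 1 : ℕ) : ℤ)) s₁ = s₁ ∧
    ((w * b) ^ ((i + j + 1 : ℕ) : ℤ)) (b s₁) = b s₁ ∧
    s₂ = facePt b w s₁ (2 * i + 1) := by
  have hbv := hb.1
  have hwv := hw.1
  have hbw : ((b * w : Equiv.Perm α)) = (w * b)⁻¹ := by
    rw [mul_inv_rev, invol_inv hbv, invol_inv hwv]
  have e1 : s₂ = ((w * b) ^ (-(i : ℤ))) (b s₁) := by
    rw [hi, Equiv.Perm.mul_apply, ← zpow_natCast (w * b) i, bconj_apply hbv hwv]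
  have e2 : s₂ = ((w * b) ^ ((j : ℤ) + 1)) (b s₁) := by
    rw [hj, Equiv.Perm.mul_apply, ← zpow_natCast (b * w) j, hbw, inv_zpow',
      wconj_apply hbv hwv, neg_neg, show w s₁ = (w * b) (b s₁) by
        rw [Equiv.Perm.mul_apply, hbv],
      ← Equiv.Perm.mul_apply ((w * b) ^ (j : ℤ)), ← zpow_add_one]
  have e3 : ((w * b) ^ ((i : ℤ) + ((j : ℤ) + 1))) (b s₁) = b s₁ := by
    have h0 := congrArg (⇑((w * b) ^ (i : ℤ))) (e1.symm.trans e2)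
    rw [← Equiv.Perm.mul_apply, ← zpow_add, add_neg_cancel, zpow_zero,
      Equiv.Perm.one_apply] at h0
    rw [← Equiv.Perm.mul_apply, ← zpow_add] at h0
    exact h0.symm
  have hNcast : ((i + j + 1 : ℕ) : ℤ) = (i : ℤ) + ((j : ℤ) + 1) := by push_cast; ring
  have hperb : ((w * b) ^ ((i + j + 1 : ℕ) : ℤ)) (b s₁) = b s₁ := by rw [hNcast]; exact e3
  have hper : ((w * b) ^ ((i + j + 1 : ℕ) : ℤ)) s₁ = s₁ := by
    have h1 := congrArg (⇑b) hperb
    rw [bconj_apply hbv hwv, hbv] at h1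
    have h2 := congrArg (⇑((w * b) ^ ((i + j + 1 : ℕ) : ℤ))) h1
    rw [← Equiv.Perm.mul_apply, ← zpow_add, add_neg_cancel, zpow_zero,
      Equiv.Perm.one_apply] at h2
    exact h2.symm
  refine ⟨hper, hperb, ?_⟩
  rw [facePt_odd]
  exact e1

lemma face_eq_image {S : Finset α} {b w : Equiv.Perm α} (hb : IsPairing S b)
    (hw : IsPairing S w) {s₁ s₂ : α} {i j : ℕ}
    (hs₁ : s₁ ∈ S)
    (hi : s₂ = (b * (w * b) ^ i) s₁) (hj : s₂ = (w * (b * w) ^ j) s₁) :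
    faceOf S b w s₁ = (Finset.range (2 * i + 2 * j + 2)).image (facePt b w s₁) := by
  obtain ⟨hper, hperb, _⟩ := periodicity hb hw hi hj
  have hN : (0 : ℤ) < ((i + j + 1 : ℕ) : ℤ) := by positivity
  ext t
  simp only [faceOf, Finset.mem_filter, Finset.mem_image, Finset.mem_range]
  constructor
  · rintro ⟨htS, hsf | hsf⟩
    · rw [evenPos_iff] at hsf
      obtain ⟨m, rfl⟩ := hsf
      set N : ℤ := ((i + j + 1 : ℕ) : ℤ) with hNdef
      have hr0 : 0 ≤ (-m) % N := Int.emod_nonneg _ (by omega)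
      have hrlt : (-m) % N < N := Int.emod_lt_of_pos _ hN
      refine ⟨2 * ((-m) % N).toNat + 1, by omega, ?_⟩
      rw [facePt_odd]
      refine zpow_period hperb ?_
      have h1 : ((((-m) % N).toNat : ℤ)) = (-m) % N := Int.toNat_of_nonneg hr0
      rw [h1]
      have h2 := (Int.mod_modEq (-m) N).neg
      rw [neg_neg] at h2
      exact h2.eq
    · obtain ⟨m, rfl⟩ := hsf
      set N : ℤ := ((i + j + 1 : ℕ) : ℤ) with hNdef
      have hr0 : 0 ≤ m % N := Int.emod_nonneg _ (by omega)
      have hrlt : m % N < N := Int.emod_lt_of_pos _ hN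
      refine ⟨2 * (m % N).toNat, by omega, ?_⟩
      rw [facePt_even]
      refine zpow_period hper ?_
      have h1 : (((m % N).toNat : ℤ)) = m % N := Int.toNat_of_nonneg hr0
      rw [h1]
      exact (Int.mod_modEq m N).eq
  · rintro ⟨n, hn, rfl⟩
    exact ⟨facePt_mem hb hw hs₁ n, facePt_sameFace s₁ n⟩

lemma arc_face {S : Finset α} {b w : Equiv.Perm α} (hb : IsPairing S b)
    (hw : IsPairing S w) {s₁ s₂ : α} {i j : ℕ}
    (hs₁ : s₁ ∈ S) (hne : s₁ ≠ s₂)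
    (hi : s₂ = (b * (w * b) ^ i) s₁) (hj : s₂ = (w * (b * w) ^ j) s₁)
    (hsize : (faceOf S b w s₁).card = 2 * i + 2 * j + 2)
    (hipos : 1 ≤ i) :
    faceOf (S \ {s₁, s₂}) (removeP b s₁ s₂) (removeP w s₁ s₂) (b s₁)
      = (Finset.Ico 1 (2 * i + 1)).image (facePt b w s₁) := by
  have hbv := hb.1
  have hwv := hw.1
  obtain ⟨hper, hperb, hs2⟩ := periodicity hb hw hi hj
  set x : ℕ → α := facePt b w s₁ with hxdef
  set L : ℕ := 2 * i + 2 * j + 2 with hLdef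
  have hF : faceOf S b w s₁ = (Finset.range L).image x := face_eq_image hb hw hs₁ hi hj
  have hinjOn : Set.InjOn x ((Finset.range L : Finset ℕ) : Set ℕ) := by
    rw [hF] at hsize
    have hc : (Finset.image x (Finset.range L)).card = (Finset.range L).card := by
      rw [hsize, Finset.card_range]
    exact Finset.card_image_iff.1 hc
  have hinj : ∀ {m n : ℕ}, m < L → n < L → x m = x n → m = n := by
    intro m n hm hn h
    exact hinjOn (by simpa using hm) (by simpa using hn) h
  have hne_idx : ∀ {m n : ℕ}, m < L → n < L → m ≠ n → x m ≠ x n :=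
    fun hm hn hmn h => hmn (hinj hm hn h)
  -- basic points
  have hx0 : x 0 = s₁ := facePt_zero b w s₁
  have hx1 : x 1 = b s₁ := by
    have h0 := facePt_step_b hbv hwv s₁ 0
    norm_num at h0
    rw [← hxdef] at h0
    rw [hx0] at h0
    exact h0.symm
  have hx2i1 : x (2 * i + 1) = s₂ := hs2.symm
  have hbs2 : b s₂ = x (2 * i) := by
    have hstep := facePt_step_b hbv hwv s₁ i
    rw [← hxdef] at hstep
    rw [hx2i1] at hstep
    have h2 := congrArg (⇑b) hstep
    rw [hbv] at h2
    exact h2.symm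
  have hws2 : w s₂ = x (2 * i + 2) := by
    have hstep := facePt_step_w hbv hwv s₁ i
    rw [← hxdef] at hstep
    rw [hx2i1] at hstep
    exact hstep
  have hxL : x L = s₁ := by
    rw [hLdef, show 2 * i + 2 * j + 2 = 2 * (i + j + 1) by ring, hxdef, facePt_even]
    exact_mod_cast hper
  have hws1 : w s₁ = x (2 * i + 2 * j + 1) := by
    have hstep := facePt_step_w hbv hwv s₁ (i + j)
    rw [← hxdef, show 2 * (i + j) + 1 = 2 * i + 2 * j + 1 by ring,
      show 2 * (i + j) + 2 = L by omega, hxL] at hstep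
    have h2 := congrArg (⇑w) hstep
    rw [hwv] at h2
    exact h2.symm
  have hs₂S : s₂ ∈ S := by rw [← hx2i1]; exact facePt_mem hb hw hs₁ _
  have hmb1 : b s₁ ≠ s₁ := (hb.2 s₁).2 hs₁
  have hmb2 : b s₂ ≠ s₂ := (hb.2 s₂).2 hs₂S
  have hmw1 : w s₁ ≠ s₁ := (hw.2 s₁).2 hs₁
  have hmw2 : w s₂ ≠ s₂ := (hw.2 s₂).2 hs₂S
  set b' : Equiv.Perm α := removeP b s₁ s₂ with hb'def
  set w' : Equiv.Perm α := removeP w s₁ s₂ with hw'def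
  have vb := removeP_apply hbv hne hmb1 hmb2
  have vw := removeP_apply hwv hne hmw1 hmw2
  have hb'inv : ∀ a, b' (b' a) = a := removeP_invol hbv hne hmb1 hmb2
  have hw'inv : ∀ a, w' (w' a) = a := removeP_invol hwv hne hmw1 hmw2
  -- values of b' on the arc
  have n0 : ∀ {m : ℕ}, 1 ≤ m → m ≤ 2 * i → x m ≠ s₁ := by
    intro m h1 h2
    rw [← hx0]
    exact hne_idx (by omega) (by omega) (by omega)
  have n1 : ∀ {m : ℕ}, 1 ≤ m → m ≤ 2 * i → x m ≠ s₂ := by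
    intro m h1 h2
    rw [← hx2i1]
    exact hne_idx (by omega) (by omega) (by omega)
  have vb_arc : ∀ m, 1 ≤ m → m ≤ 2 * i → b' (x m) =
      if m = 1 then x (2 * i) else if m = 2 * i then x 1 else b (x m) := by
    intro m h1 h2
    rw [vb (x m), if_neg (n0 h1 h2), if_neg (n1 h1 h2)]
    by_cases hm1 : m = 1
    · subst hm1
      rw [if_pos hx1, if_pos rfl, hbs2]
    · rw [if_neg hm1]
      by_cases hm2 : m = 2 * i
      · subst hm2
        rw [if_neg (by rw [← hx1]; exact hne_idx (by omega) (by omega) (by omega)),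
          if_pos (by rw [hbs2]), if_pos rfl, hx1]
      · rw [if_neg hm2, if_neg (by rw [← hx1]; exact hne_idx (by omega) (by omega) (by omega)),
          if_neg (by rw [hbs2]; exact hne_idx (by omega) (by omega) (by omega))]
  have vw_arc : ∀ m, 1 ≤ m → m ≤ 2 * i → w' (x m) = w (x m) := by
    intro m h1 h2
    have nw1 : x m ≠ w s₁ := by
      rw [hws1]
      exact hne_idx (by omega) (by omega) (by omega)
    have nw2 : x m ≠ w s₂ := by
      by_cases hj0 : j = 0
      · have : w s₂ = s₁ := by
          rw [hws2, show 2 * i + 2 = L by omega, hxL]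
        rw [this]
        exact n0 h1 h2
      · rw [hws2]
        exact hne_idx (by omega) (by omega) (by omega)
    rw [vw (x m), if_neg (n0 h1 h2), if_neg (n1 h1 h2), if_neg nw1, if_neg nw2]
  -- steps along the arc
  have step : ∀ m, 1 ≤ m → m < 2 * i → SameFace b' w' (x m) (x (m + 1)) := by
    intro m h1 hlt
    rcases Nat.even_or_odd m with ⟨k, hk⟩ | ⟨k, hk⟩
    · have hm1 : m ≠ 1 := by omega
      have hm2 : m ≠ 2 * i := by omega
      have hb'm : b' (x m) = x (m + 1) := by
        rw [vb_arc m h1 (le_of_lt hlt), if_neg hm1, if_neg hm2,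
          show m + 1 = 2 * k + 1 from by omega, show m = 2 * k from by omega, hxdef]
        exact facePt_step_b hbv hwv s₁ k
      rw [← hb'm]
      exact sameFace_b (x m)
    · have hw'm : w' (x m) = x (m + 1) := by
        rw [vw_arc m h1 (le_of_lt hlt), show m = 2 * k + 1 by omega]
        exact facePt_step_w hbv hwv s₁ k
      rw [← hw'm]
      exact sameFace_w hb'inv (x m)
  have chain : ∀ m, 1 ≤ m → m ≤ 2 * i → SameFace b' w' (b s₁) (x m) := by
    intro m
    induction m with
    | zero => intro h1 _; omega
    | succ n ih =>
        intro h1 h2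
        by_cases hn0 : n = 0
        · subst hn0
          rw [show (0 + 1 : ℕ) = 1 from rfl, hx1]
          exact sameFace_refl (b s₁)
        · exact sameFace_trans hb'inv hw'inv (ih (by omega) (by omega))
            (step n (by omega) (by omega))
  -- closure of the arc
  have hclosed : ∀ u ∈ {u | ∃ m, 1 ≤ m ∧ m ≤ 2 * i ∧ u = x m},
      b' u ∈ {u | ∃ m, 1 ≤ m ∧ m ≤ 2 * i ∧ u = x m} ∧
      w' u ∈ {u | ∃ m, 1 ≤ m ∧ m ≤ 2 * i ∧ u = x m} := by
    rintro u ⟨m, h1, h2, rfl⟩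
    constructor
    · by_cases hm1 : m = 1
      · subst hm1
        refine ⟨2 * i, by omega, le_refl _, ?_⟩
        rw [vb_arc 1 (le_refl 1) (by omega), if_pos rfl]
      · by_cases hm2 : m = 2 * i
        · subst hm2
          refine ⟨1, le_refl 1, by omega, ?_⟩
          rw [vb_arc (2 * i) (by omega) (le_refl _), if_neg hm1, if_pos rfl]
        · rcases Nat.even_or_odd m with ⟨k, hk⟩ | ⟨k, hk⟩
          · refine ⟨m + 1, by omega, by omega, ?_⟩
            rw [vb_arc m h1 h2, if_neg hm1, if_neg hm2,
              show m + 1 = 2 * k + 1 from by omega, show m = 2 * k from by omega, hxdef]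
            exact facePt_step_b hbv hwv s₁ k
          · refine ⟨m - 1, by omega, by omega, ?_⟩
            rw [vb_arc m h1 h2, if_neg hm1, if_neg hm2,
              show m - 1 = 2 * k from by omega, show m = 2 * k + 1 from by omega, hxdef]
            exact facePt_step_b' hbv hwv s₁ k
    · rcases Nat.even_or_odd m with ⟨k, hk⟩ | ⟨k, hk⟩
      · refine ⟨m - 1, by omega, by omega, ?_⟩
        rw [vw_arc m h1 h2, show m - 1 = 2 * (k - 1) + 1 from by omega,
          show m = 2 * (k - 1) + 2 from by omega, hxdef]
        exact facePt_step_w' hbv hwv s₁ (k - 1)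
      · refine ⟨m + 1, by omega, by omega, ?_⟩
        rw [vw_arc m h1 h2, show m + 1 = 2 * k + 2 from by omega,
          show m = 2 * k + 1 from by omega, hxdef]
        exact facePt_step_w hbv hwv s₁ k
  -- conclusion
  ext u
  simp only [faceOf, Finset.mem_filter, Finset.mem_sdiff, Finset.mem_image,
    Finset.mem_Ico, Finset.mem_insert, Finset.mem_singleton]
  constructor
  · rintro ⟨⟨huS, hu12⟩, hsf⟩
    have hbase : b s₁ ∈ {u | ∃ m, 1 ≤ m ∧ m ≤ 2 * i ∧ u = x m} := ⟨1, le_refl 1, by omega, hx1.symm⟩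
    have := orbit_closed hb'inv hw'inv hclosed hbase hsf
    obtain ⟨m, h1, h2, rfl⟩ := this
    exact ⟨m, ⟨h1, by omega⟩, rfl⟩
  · rintro ⟨m, ⟨h1, h2⟩, rfl⟩
    refine ⟨⟨facePt_mem hb hw hs₁ m, ?_⟩, chain m h1 (by omega)⟩
    push_neg
    exact ⟨n0 h1 (by omega), n1 h1 (by omega)⟩

lemma faceOf_comm {S : Finset α} {b w : Equiv.Perm α} (hb : ∀ a, b (b a) = a)
    (hw : ∀ a, w (w a) = a) (s : α) : faceOf S b w s = faceOf S w b s :=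
  Finset.filter_congr fun _ _ => ⟨sameFace_comm hb hw, sameFace_comm hw hb⟩

lemma facePt_flip {b w : Equiv.Perm α} (hb : ∀ a, b (b a) = a) (hw : ∀ a, w (w a) = a)
    {s₁ : α} {N : ℕ}
    (hper : ((w * b) ^ ((N : ℕ) : ℤ)) s₁ = s₁)
    (hperb : ((w * b) ^ ((N : ℕ) : ℤ)) (b s₁) = b s₁)
    {m : ℕ} (h1 : 1 ≤ m) (h2 : m ≤ 2 * N) :
    facePt w b s₁ m = facePt b w s₁ (2 * N - m) := by
  have hbw : ((b * w : Equiv.Perm α)) = (w * b)⁻¹ := by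
    rw [mul_inv_rev, invol_inv hb, invol_inv hw]
  rcases Nat.even_or_odd m with ⟨k, hk⟩ | ⟨k, hk⟩
  · rw [show 2 * N - m = 2 * (N - k) from by omega, show m = 2 * k from by omega,
      facePt_even, facePt_even, hbw, inv_zpow']
    refine zpow_period hper ?_
    have hc : ((N - k : ℕ) : ℤ) = (N : ℤ) - (k : ℤ) := by omega
    rw [hc]
    have hmod : (-(k : ℤ)) ≡ ((N : ℤ) - (k : ℤ)) [ZMOD (N : ℤ)] := by
      rw [Int.modEq_iff_dvd]
      exact ⟨1, by ring⟩
    exact hmod.eq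
  · rw [show 2 * N - m = 2 * (N - k - 1) + 1 from by omega, show m = 2 * k + 1 from by omega,
      facePt_odd, facePt_odd, hbw, inv_zpow', neg_neg,
      show w s₁ = (w * b) (b s₁) from by rw [Equiv.Perm.mul_apply, hb],
      ← Equiv.Perm.mul_apply ((w * b) ^ (k : ℤ)), ← zpow_add_one]
    refine zpow_period hperb ?_
    have hc : ((N - k - 1 : ℕ) : ℤ) = (N : ℤ) - (k : ℤ) - 1 := by omega
    rw [hc]
    have hmod : ((k : ℤ) + 1) ≡ (-((N : ℤ) - (k : ℤ) - 1)) [ZMOD (N : ℤ)] := by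
      rw [Int.modEq_iff_dvd]
      exact ⟨-1, by ring⟩
    exact hmod.eq

/-- straight edge removal: let `E₀ = {s₁, s₂}` (with `s₂ = e s₁`)
be a straight edge of the map `M = (S,b,w,e)`, whose edge-sides lie in
the face `F` of `M`, with `2i` edge-sides between `s₁` and `s₂` in one direction
around `F` and `2j` in the other direction (so `F` has size `2i + 2j + 2`).
Then the faces of `M \ E₀` are obtained from those of `M` by replacing `F` by two
faces of sizes `2i` and `2j` (a face of size `0` being omitted), all other faces
being unchanged. -/
theorem faces_remove_straight_edge (S : Finset α) (b w e : Equiv.Perm α)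
    (hb : IsPairing S b) (hw : IsPairing S w) (he : IsPairing S e)
    (s₁ s₂ : α) (hs₁ : s₁ ∈ S) (hedge : e s₁ = s₂)
    (hstraight : IsStraight b w s₁ s₂)
    (i j : ℕ)
    (hi : s₂ = (b * (w * b) ^ i) s₁)
    (hj : s₂ = (w * (b * w) ^ j) s₁)
    (hsize : (faceOf S b w s₁).card = 2 * i + 2 * j + 2) :
    ∃ F₁ F₂ : Finset α,
      F₁.card = 2 * i ∧ F₂.card = 2 * j ∧ Disjoint F₁ F₂ ∧
      F₁ ∪ F₂ = faceOf S b w s₁ \ {s₁, s₂} ∧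
      faces (S \ {s₁, s₂}) (removeP b s₁ s₂) (removeP w s₁ s₂)
        = (faces S b w).erase (faceOf S b w s₁) ∪
            ({F₁, F₂} : Finset (Finset α)).filter Finset.Nonempty := by
  have hbv := hb.1
  have hwv := hw.1
  have hes₁ : e s₁ ≠ s₁ := (he.2 s₁).2 hs₁
  have hne : s₁ ≠ s₂ := fun h => hes₁ (by rw [hedge, ← h])
  obtain ⟨hper, hperb, hs2⟩ := periodicity hb hw hi hj
  set x : ℕ → α := facePt b w s₁ with hxdef
  set L : ℕ := 2 * i + 2 * j + 2 with hLdef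
  have hF : faceOf S b w s₁ = (Finset.range L).image x := face_eq_image hb hw hs₁ hi hj
  have hsize' : (Finset.image x (Finset.range L)).card = L := by rw [← hF]; exact hsize
  have hinjOn : Set.InjOn x ((Finset.range L : Finset ℕ) : Set ℕ) := by
    have hc : (Finset.image x (Finset.range L)).card = (Finset.range L).card := by
      rw [hsize', Finset.card_range]
    exact Finset.card_image_iff.1 hc
  have hinj : ∀ {m n : ℕ}, m < L → n < L → x m = x n → m = n := by
    intro m n hm hn h
    exact hinjOn (by simpa using hm) (by simpa using hn) h
  have hne_idx : ∀ {m n : ℕ}, m < L → n < L → m ≠ n → x m ≠ x n :=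
    fun hm hn hmn h => hmn (hinj hm hn h)
  -- basic points
  have hx0 : x 0 = s₁ := facePt_zero b w s₁
  have hx1 : x 1 = b s₁ := by
    have h0 := facePt_step_b hbv hwv s₁ 0
    norm_num at h0
    rw [← hxdef] at h0
    rw [hx0] at h0
    exact h0.symm
  have hx2i1 : x (2 * i + 1) = s₂ := hs2.symm
  have hbs2 : b s₂ = x (2 * i) := by
    have hstep := facePt_step_b hbv hwv s₁ i
    rw [← hxdef] at hstep
    rw [hx2i1] at hstep
    have h2 := congrArg (⇑b) hstep
    rw [hbv] at h2
    exact h2.symm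
  have hws2 : w s₂ = x (2 * i + 2) := by
    have hstep := facePt_step_w hbv hwv s₁ i
    rw [← hxdef] at hstep
    rw [hx2i1] at hstep
    exact hstep
  have hxL : x L = s₁ := by
    rw [hLdef, show 2 * i + 2 * j + 2 = 2 * (i + j + 1) by ring, hxdef, facePt_even]
    exact_mod_cast hper
  have hws1 : w s₁ = x (2 * i + 2 * j + 1) := by
    have hstep := facePt_step_w hbv hwv s₁ (i + j)
    rw [← hxdef, show 2 * (i + j) + 1 = 2 * i + 2 * j + 1 by ring,
      show 2 * (i + j) + 2 = L by omega, hxL] at hstep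
    have h2 := congrArg (⇑w) hstep
    rw [hwv] at h2
    exact h2.symm
  have hs₂S : s₂ ∈ S := by rw [← hx2i1]; exact facePt_mem hb hw hs₁ _
  have hmb1 : b s₁ ≠ s₁ := (hb.2 s₁).2 hs₁
  have hmb2 : b s₂ ≠ s₂ := (hb.2 s₂).2 hs₂S
  have hmw1 : w s₁ ≠ s₁ := (hw.2 s₁).2 hs₁
  have hmw2 : w s₂ ≠ s₂ := (hw.2 s₂).2 hs₂S
  set b' : Equiv.Perm α := removeP b s₁ s₂ with hb'def
  set w' : Equiv.Perm α := removeP w s₁ s₂ with hw'def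
  have vb := removeP_apply hbv hne hmb1 hmb2
  have vw := removeP_apply hwv hne hmw1 hmw2
  have hb'inv : ∀ a, b' (b' a) = a := removeP_invol hbv hne hmb1 hmb2
  have hw'inv : ∀ a, w' (w' a) = a := removeP_invol hwv hne hmw1 hmw2
  set F : Finset α := faceOf S b w s₁ with hFdef
  set F₁ : Finset α := (Finset.Ico 1 (2 * i + 1)).image x with hF1def
  set F₂ : Finset α := (Finset.Ico (2 * i + 2) L).image x with hF2def
  -- membership of the six special points in the face F
  have hsF : ∀ n : ℕ, SameFace b w s₁ (x n) := fun n => facePt_sameFace s₁ n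
  have spec1 : SameFace b w s₁ s₁ := sameFace_refl s₁
  have spec2 : SameFace b w s₁ s₂ := by rw [← hx2i1]; exact hsF _
  have spec3 : SameFace b w s₁ (b s₁) := by rw [← hx1]; exact hsF _
  have spec4 : SameFace b w s₁ (b s₂) := by rw [hbs2]; exact hsF _
  have spec5 : SameFace b w s₁ (w s₁) := by rw [hws1]; exact hsF _
  have spec6 : SameFace b w s₁ (w s₂) := by rw [hws2]; exact hsF _
  refine ⟨F₁, F₂, ?_, ?_, ?_, ?_, ?_⟩
  · -- card F₁
    rw [hF1def, Finset.card_image_of_injOn (hinjOn.mono (by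
      intro a ha
      simp only [Finset.coe_Ico, Set.mem_Ico] at ha
      simp only [Finset.coe_range, Set.mem_Iio]
      omega)), Nat.card_Ico]
    omega
  · -- card F₂
    rw [hF2def, Finset.card_image_of_injOn (hinjOn.mono (by
      intro a ha
      simp only [Finset.coe_Ico, Set.mem_Ico] at ha
      simp only [Finset.coe_range, Set.mem_Iio]
      omega)), Nat.card_Ico]
    omega
  · -- disjoint
    rw [Finset.disjoint_left]
    rintro a ha1 ha2
    rw [hF1def, Finset.mem_image] at ha1
    rw [hF2def, Finset.mem_image] at ha2
    obtain ⟨m, hm, rfl⟩ := ha1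
    obtain ⟨n, hn, hxn⟩ := ha2
    rw [Finset.mem_Ico] at hm hn
    have := hinj (by omega) (by omega) hxn.symm
    omega
  · -- union
    rw [hF1def, hF2def, hF]
    ext u
    simp only [Finset.mem_union, Finset.mem_image, Finset.mem_Ico, Finset.mem_sdiff,
      Finset.mem_range, Finset.mem_insert, Finset.mem_singleton]
    constructor
    · rintro (⟨m, hm, rfl⟩ | ⟨m, hm, rfl⟩)
      · refine ⟨⟨m, by omega, rfl⟩, ?_⟩
        push_neg
        constructor
        · rw [← hx0]; exact hne_idx (by omega) (by omega) (by omega)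
        · rw [← hx2i1]; exact hne_idx (by omega) (by omega) (by omega)
      · refine ⟨⟨m, by omega, rfl⟩, ?_⟩
        push_neg
        constructor
        · rw [← hx0]; exact hne_idx (by omega) (by omega) (by omega)
        · rw [← hx2i1]; exact hne_idx (by omega) (by omega) (by omega)
    · rintro ⟨⟨m, hmL, rfl⟩, hu⟩
      push_neg at hu
      have hm0 : m ≠ 0 := fun h => hu.1 (by rw [h, hx0])
      have hm2i1 : m ≠ 2 * i + 1 := fun h => hu.2 (by rw [h, hx2i1])
      by_cases hc : m ≤ 2 * i
      · exact Or.inl ⟨m, by omega, rfl⟩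
      · exact Or.inr ⟨m, by omega, rfl⟩
  · -- faces equality
    -- Step A: faces outside F are unchanged
    have key1 : ∀ t, t ∈ S → t ∉ F → faceOf (S \ {s₁, s₂}) b' w' t = faceOf S b w t := by
      intro t htS htF
      have hnsf : ¬ SameFace b w s₁ t := fun h => htF (Finset.mem_filter.2 ⟨htS, h⟩)
      have hnu : ∀ u v, SameFace b w t u → SameFace b w s₁ v → u ≠ v := by
        intro u v hu hv heq
        exact hnsf (sameFace_trans hbv hwv hv
          (heq ▸ sameFace_symm hbv hwv hu))
      have hagree : ∀ u, SameFace b w t u → b' u = b u ∧ w' u = w u := by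
        intro u hu
        constructor
        · rw [vb u, if_neg (hnu u s₁ hu spec1), if_neg (hnu u s₂ hu spec2),
            if_neg (hnu u (b s₁) hu spec3), if_neg (hnu u (b s₂) hu spec4)]
        · rw [vw u, if_neg (hnu u s₁ hu spec1), if_neg (hnu u s₂ hu spec2),
            if_neg (hnu u (w s₁) hu spec5), if_neg (hnu u (w s₂) hu spec6)]
      have hiff := sameFace_congr hbv hwv hb'inv hw'inv hagree
      ext u
      simp only [faceOf, Finset.mem_filter, Finset.mem_sdiff, Finset.mem_insert,
        Finset.mem_singleton]
      constructor
      · rintro ⟨⟨huS, _⟩, hsf⟩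
        exact ⟨huS, (hiff u).2 hsf⟩
      · rintro ⟨huS, hsf⟩
        refine ⟨⟨huS, ?_⟩, (hiff u).1 hsf⟩
        push_neg
        exact ⟨fun h => hnu u s₁ hsf spec1 h, fun h => hnu u s₂ hsf spec2 h⟩
    -- Step B: erase computation
    have key_erase : (S \ F).image (faceOf S b w) = (faces S b w).erase F := by
      ext G
      simp only [Finset.mem_image, Finset.mem_sdiff, Finset.mem_erase, faces]
      constructor
      · rintro ⟨t, ⟨htS, htF⟩, rfl⟩
        refine ⟨fun h => htF ?_, ⟨t, htS, rfl⟩⟩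
        · rw [← h]
          exact Finset.mem_filter.2 ⟨htS, sameFace_refl t⟩
      · rintro ⟨hGF, t, htS, rfl⟩
        refine ⟨t, ⟨htS, fun htF => hGF ?_⟩, rfl⟩
        have hsf : SameFace b w s₁ t := (Finset.mem_filter.1 htF).2
        rw [hFdef]
        exact (faceOf_congr hbv hwv hsf).symm
    -- Step C: S' decomposition
    have hs₁F : s₁ ∈ F := Finset.mem_filter.2 ⟨hs₁, spec1⟩
    have hs₂F : s₂ ∈ F := Finset.mem_filter.2 ⟨hs₂S, spec2⟩
    have hFS : F ⊆ S := Finset.filter_subset _ _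
    have hunion : F₁ ∪ F₂ = F \ {s₁, s₂} := by
      rw [hF1def, hF2def, hF]
      ext u
      simp only [Finset.mem_union, Finset.mem_image, Finset.mem_Ico, Finset.mem_sdiff,
        Finset.mem_range, Finset.mem_insert, Finset.mem_singleton]
      constructor
      · rintro (⟨m, hm, rfl⟩ | ⟨m, hm, rfl⟩)
        · refine ⟨⟨m, by omega, rfl⟩, ?_⟩
          push_neg
          constructor
          · rw [← hx0]; exact hne_idx (by omega) (by omega) (by omega)
          · rw [← hx2i1]; exact hne_idx (by omega) (by omega) (by omega)
        · refine ⟨⟨m, by omega, rfl⟩, ?_⟩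
          push_neg
          constructor
          · rw [← hx0]; exact hne_idx (by omega) (by omega) (by omega)
          · rw [← hx2i1]; exact hne_idx (by omega) (by omega) (by omega)
      · rintro ⟨⟨m, hmL, rfl⟩, hu⟩
        push_neg at hu
        have hm0 : m ≠ 0 := fun h => hu.1 (by rw [h, hx0])
        have hm2i1 : m ≠ 2 * i + 1 := fun h => hu.2 (by rw [h, hx2i1])
        by_cases hc : m ≤ 2 * i
        · exact Or.inl ⟨m, by omega, rfl⟩
        · exact Or.inr ⟨m, by omega, rfl⟩
    have hSdecomp : S \ {s₁, s₂} = (S \ F) ∪ (F₁ ∪ F₂) := by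
      rw [hunion]
      ext u
      simp only [Finset.mem_union, Finset.mem_sdiff, Finset.mem_insert, Finset.mem_singleton]
      constructor
      · rintro ⟨huS, hu⟩
        by_cases hcF : u ∈ F
        · exact Or.inr ⟨hcF, hu⟩
        · exact Or.inl ⟨huS, hcF⟩
      · rintro (⟨huS, hcF⟩ | ⟨huF, hu⟩)
        · refine ⟨huS, ?_⟩
          push_neg
          exact ⟨fun h => hcF (h ▸ hs₁F), fun h => hcF (h ▸ hs₂F)⟩
        · exact ⟨hFS huF, hu⟩
    -- Step D: the two new faces
    have himg1 : F₁.image (faceOf (S \ {s₁, s₂}) b' w')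
        = ({F₁} : Finset (Finset α)).filter Finset.Nonempty := by
      by_cases hi0 : i = 0
      · subst hi0
        have hF1e : F₁ = ∅ := by rw [hF1def]; norm_num
        rw [hF1e]
        simp [Finset.filter_singleton]
      · have hipos : 1 ≤ i := by omega
        have harc : faceOf (S \ {s₁, s₂}) b' w' (b s₁) = F₁ :=
          arc_face hb hw hs₁ hne hi hj hsize hipos
        have hconst : ∀ t ∈ F₁, faceOf (S \ {s₁, s₂}) b' w' t = F₁ := by
          intro t ht
          rw [← harc] at ht
          have hsf : SameFace b' w' (b s₁) t := (Finset.mem_filter.1 ht).2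
          rw [← faceOf_congr hb'inv hw'inv hsf, harc]
        have hF1ne : F₁.Nonempty := by
          refine ⟨x 1, ?_⟩
          rw [hF1def]
          exact Finset.mem_image.2 ⟨1, Finset.mem_Ico.2 ⟨le_refl 1, by omega⟩, rfl⟩
        rw [Finset.image_congr (fun t ht => hconst t ht), Finset.image_const hF1ne,
          Finset.filter_singleton, if_pos hF1ne]
    have himg2 : F₂.image (faceOf (S \ {s₁, s₂}) b' w')
        = ({F₂} : Finset (Finset α)).filter Finset.Nonempty := by
      by_cases hj0 : j = 0
      · subst hj0
        have hF2e : F₂ = ∅ := by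
          rw [hF2def]
          have : Finset.Ico (2 * i + 2) L = ∅ := by
            apply Finset.Ico_eq_empty
            omega
          rw [this, Finset.image_empty]
        rw [hF2e]
        simp [Finset.filter_singleton]
      · have hjpos : 1 ≤ j := by omega
        have hsizew : (faceOf S w b s₁).card = 2 * j + 2 * i + 2 := by
          rw [← faceOf_comm hbv hwv s₁, ← hFdef]
          omega
        have harcw : faceOf (S \ {s₁, s₂}) (removeP w s₁ s₂) (removeP b s₁ s₂) (w s₁)
            = (Finset.Ico 1 (2 * j + 1)).image (facePt w b s₁) :=
          arc_face hw hb hs₁ hne hj hi hsizew hjpos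
        have hflipimg : (Finset.Ico 1 (2 * j + 1)).image (facePt w b s₁) = F₂ := by
          rw [hF2def]
          ext u
          simp only [Finset.mem_image, Finset.mem_Ico]
          constructor
          · rintro ⟨m, hm, rfl⟩
            refine ⟨2 * (i + j + 1) - m, by omega, ?_⟩
            rw [hxdef]
            rw [← facePt_flip hbv hwv hper hperb (by omega) (by omega)]
          · rintro ⟨n, hn, rfl⟩
            refine ⟨2 * (i + j + 1) - n, by omega, ?_⟩
            rw [hxdef]
            rw [facePt_flip hbv hwv hper hperb (by omega) (by omega),
              show 2 * (i + j + 1) - (2 * (i + j + 1) - n) = n from by omega]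
        have harc : faceOf (S \ {s₁, s₂}) b' w' (w s₁) = F₂ := by
          rw [faceOf_comm hb'inv hw'inv, hb'def, hw'def, harcw, hflipimg]
        have hconst : ∀ t ∈ F₂, faceOf (S \ {s₁, s₂}) b' w' t = F₂ := by
          intro t ht
          rw [← harc] at ht
          have hsf : SameFace b' w' (w s₁) t := (Finset.mem_filter.1 ht).2
          rw [← faceOf_congr hb'inv hw'inv hsf, harc]
        have hF2ne : F₂.Nonempty := by
          refine ⟨x (2 * i + 2), ?_⟩
          rw [hF2def]
          exact Finset.mem_image.2 ⟨2 * i + 2, Finset.mem_Ico.2 ⟨le_refl _, by omega⟩, rfl⟩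
        rw [Finset.image_congr (fun t ht => hconst t ht), Finset.image_const hF2ne,
          Finset.filter_singleton, if_pos hF2ne]
    -- assembly
    have himg0 : (S \ F).image (faceOf (S \ {s₁, s₂}) b' w')
        = (faces S b w).erase F := by
      rw [← key_erase]
      apply Finset.image_congr
      intro t ht
      rw [Finset.mem_coe, Finset.mem_sdiff] at ht
      exact key1 t ht.1 ht.2
    have step1 : faces (S \ {s₁, s₂}) b' w'
        = ((S \ F) ∪ (F₁ ∪ F₂)).image (faceOf (S \ {s₁, s₂}) b' w') := by
      rw [← hSdecomp]
      rfl
    rw [step1, Finset.image_union, Finset.image_union, himg0, himg1, himg2]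
    congr 1
    rw [show ({F₁, F₂} : Finset (Finset α)) = {F₁} ∪ {F₂} from rfl, Finset.filter_union]


end
end
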